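/- arXiv:1412.6080 — 4 statements merged into one kernel-verified Lean document; each statement's English description precedes it below -/
import Mathlib

section
/- For every s-dimensional K-subspace V of L, there exists a unique monic θ-polynomial P_V of θ-degree exactly s such that P_V(x) = 0 for all x ∈ V. -/
open Polynomial Module

set_option linter.unusedSectionVars false

/-- Evaluation of a θ-polynomial at `g`. -/
noncomputable def skewEval {K L : Type*} [Field K] [Field L] [Algebra K L]
    (θ : L ≃ₐ[K] L) (P : Polynomial L) (g : L) : L :=
  P.sum fun i a => a * (θ ^ i) g

section Basic

variable {K L : Type*} [Field K] [Field L] [Algebra K L] (θ : L ≃ₐ[K] L)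

lemma skewEval_eq_sum_range {P : Polynomial L} {m : ℕ} (h : P.natDegree < m) (x : L) :
    skewEval θ P x = ∑ i ∈ Finset.range m, P.coeff i * (θ ^ i) x :=
  P.sum_over_range' (f := fun i a => a * (θ ^ i) x) (fun _ => zero_mul _) m h

/-- `skewEval` as a `K`-linear map in the argument. -/
noncomputable def skewMap (P : Polynomial L) : L →ₗ[K] L :=
  P.sum fun i a => a • (θ ^ i).toLinearMap

lemma skewMap_apply (P : Polynomial L) (x : L) : skewMap θ P x = skewEval θ P x := by
  rw [skewMap, skewEval, Polynomial.sum_def, Polynomial.sum_def]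
  rw [LinearMap.coe_sum, Finset.sum_apply]
  simp [smul_eq_mul]

lemma skewEval_sub (P Q : Polynomial L) (x : L) :
    skewEval θ (P - Q) x = skewEval θ P x - skewEval θ Q x := by
  set m := max P.natDegree Q.natDegree + 1 with hm
  have h1 : P.natDegree < m := by omega
  have h2 : Q.natDegree < m := by omega
  have h3 : (P - Q).natDegree < m := lt_of_le_of_lt (natDegree_sub_le P Q) (by omega)
  rw [skewEval_eq_sum_range θ h1, skewEval_eq_sum_range θ h2, skewEval_eq_sum_range θ h3,
    ← Finset.sum_sub_distrib]
  exact Finset.sum_congr rfl fun i _ => by rw [coeff_sub, sub_mul]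

lemma skewEval_C_mul (c : L) (P : Polynomial L) (x : L) :
    skewEval θ (C c * P) x = c * skewEval θ P x := by
  rcases eq_or_ne P 0 with rfl | hP
  · simp [skewEval]
  have h3 : (C c * P).natDegree < P.natDegree + 1 :=
    lt_of_le_of_lt (natDegree_C_mul_le c P) (by omega)
  rw [skewEval_eq_sum_range θ h3, skewEval_eq_sum_range θ (Nat.lt_succ_self _), Finset.mul_sum]
  exact Finset.sum_congr rfl fun i _ => by rw [coeff_C_mul, mul_assoc]

lemma skewEval_C (c : L) (x : L) : skewEval θ (C c) x = c * x := by
  rcases eq_or_ne c 0 with rfl | hc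
  · simp [skewEval]
  rw [skewEval_eq_sum_range θ (m := 1) (by simp), Finset.sum_range_one]
  simp

lemma ker_skewMap_of_natDegree_zero {P : Polynomial L} (hP : P ≠ 0) (h0 : P.natDegree = 0) :
    LinearMap.ker (skewMap θ P) = ⊥ := by
  have hC : P = C (P.coeff 0) := Polynomial.eq_C_of_natDegree_eq_zero h0
  have hc : P.coeff 0 ≠ 0 := fun h => hP (by rw [hC, h, map_zero])
  ext x
  simp only [LinearMap.mem_ker, Submodule.mem_bot, skewMap_apply]
  constructor
  · intro h
    rw [hC, skewEval_C] at h
    exact (mul_eq_zero.mp h).resolve_left hc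
  · rintro rfl
    rw [hC, skewEval_C, mul_zero]

/-- Key dimension bound: a nonzero θ-polynomial of degree `≤ d` has kernel of
dimension at most `d`. -/
lemma finrank_ker_skewMap_le [FiniteDimensional K L]
    (hfix : ∀ x : L, θ x = x → ∃ c : K, algebraMap K L c = x) :
    ∀ (d : ℕ) (P : Polynomial L), P ≠ 0 → P.natDegree ≤ d →
      finrank K (LinearMap.ker (skewMap θ P)) ≤ d := by
  intro d
  induction d with
  | zero =>
    intro P hP h0
    rw [ker_skewMap_of_natDegree_zero θ hP (Nat.le_zero.mp h0)]
    simp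
  | succ d IH =>
    intro P hP hdeg
    rcases Nat.eq_zero_or_pos P.natDegree with h0 | hDpos
    · rw [ker_skewMap_of_natDegree_zero θ hP h0]; simp
    set W := LinearMap.ker (skewMap θ P) with hW
    rcases eq_or_ne W ⊥ with hbot | hne
    · rw [hbot]; simp
    obtain ⟨v, hvW, hv0⟩ := Submodule.ne_bot_iff W |>.mp hne
    set D := P.natDegree with hD
    set p' : ℕ → L := fun i => P.coeff i * (θ ^ i) v with hp'
    set r : ℕ → L := fun j => ∑ i ∈ Finset.Ico (j + 1) (D + 1), p' i with hr
    have hvz : skewEval θ P v = 0 := by rw [← skewMap_apply]; exact hvW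
    have hsum : ∑ i ∈ Finset.range (D + 1), p' i = 0 := by
      rw [← skewEval_eq_sum_range θ (Nat.lt_succ_self D)]; exact hvz
    have hr0 : r 0 = -p' 0 := by
      rw [Finset.range_eq_Ico, Finset.sum_eq_sum_Ico_succ_bot (by omega) p'] at hsum
      rw [zero_add] at hsum
      have h' : r 0 = ∑ i ∈ Finset.Ico 1 (D + 1), p' i := rfl
      rw [h']; linear_combination hsum
    have hrD : r D = 0 := by
      have : Finset.Ico (D + 1) (D + 1) = ∅ := Finset.Ico_self _
      simp [hr, this]
    have hrstep : ∀ j < D, r j = p' (j + 1) + r (j + 1) := by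
      intro j hj
      exact Finset.sum_eq_sum_Ico_succ_bot (by omega) p'
    set Q : Polynomial L := ∑ j ∈ Finset.range D, C (r j) * X ^ j with hQ
    have coeffQ : ∀ j, Q.coeff j = if j < D then r j else 0 := by
      intro j
      rw [hQ, finset_sum_coeff]
      simp only [coeff_C_mul, coeff_X_pow, mul_ite, mul_one, mul_zero]
      rw [Finset.sum_ite_eq (Finset.range D) j r]
      simp [Finset.mem_range]
    have hpD : p' D ≠ 0 := by
      have h1 : P.coeff D ≠ 0 := by
        rw [hD]; exact Polynomial.leadingCoeff_ne_zero.mpr hP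
      have h2 : (θ ^ D) v ≠ 0 := fun h => hv0 ((θ ^ D).injective (by rw [h, map_zero]))
      exact mul_ne_zero h1 h2
    have hrD1 : r (D - 1) = p' D := by
      have h1 : D - 1 < D := by omega
      have := hrstep (D - 1) h1
      rw [show D - 1 + 1 = D by omega] at this
      rw [this, hrD, add_zero]
    have hQne : Q ≠ 0 := by
      intro h
      have := coeffQ (D - 1)
      rw [h, coeff_zero, if_pos (by omega : D - 1 < D)] at this
      exact hpD (hrD1 ▸ this.symm)
    have hQdeg : Q.natDegree ≤ D - 1 := by
      apply Polynomial.natDegree_sum_le_of_forall_le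
      intro j hj
      refine le_trans (natDegree_C_mul_le _ _) ?_
      rw [natDegree_X_pow]
      have : j < D := Finset.mem_range.mp hj
      omega
    have hQD : Q.natDegree < D := lt_of_le_of_lt hQdeg (by omega)
    -- the key identity
    have key : ∀ y : L, skewEval θ Q (θ y - y) = skewEval θ P (y * v) := by
      intro y
      have lhs : skewEval θ Q (θ y - y)
          = ∑ j ∈ Finset.range D, r j * ((θ ^ (j + 1)) y - (θ ^ j) y) := by
        rw [skewEval_eq_sum_range θ hQD]
        refine Finset.sum_congr rfl fun j hj => ?_
        rw [coeffQ j, if_pos (Finset.mem_range.mp hj), map_sub, pow_succ, AlgEquiv.mul_apply]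
      have rhs : skewEval θ P (y * v)
          = ∑ i ∈ Finset.range (D + 1), p' i * (θ ^ i) y := by
        rw [skewEval_eq_sum_range θ (Nat.lt_succ_self D)]
        refine Finset.sum_congr rfl fun i _ => ?_
        rw [map_mul, hp']; ring
      rw [lhs, rhs]
      have e1 : ∀ j ∈ Finset.range D, r j * ((θ ^ (j + 1)) y - (θ ^ j) y)
          = (r (j + 1) * (θ ^ (j + 1)) y - r j * (θ ^ j) y) + p' (j + 1) * (θ ^ (j + 1)) y := by
        intro j hj
        have := hrstep j (Finset.mem_range.mp hj)
        rw [this]; ring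
      rw [Finset.sum_congr rfl e1]
      rw [Finset.sum_add_distrib]
      rw [Finset.sum_range_sub (fun j => r j * (θ ^ j) y) D]
      rw [Finset.sum_range_succ' (fun i => p' i * (θ ^ i) y) D]
      rw [hrD, hr0]
      simp only [pow_zero, AlgEquiv.one_apply, zero_mul]
      ring
    -- now the dimension count
    set u := v⁻¹ with hu
    set κ : L →ₗ[K] L :=
      θ.toLinearMap ∘ₗ LinearMap.mulRight K u - LinearMap.mulRight K u with hκ
    have hκa : ∀ x : L, κ x = θ (x * u) - x * u := fun x => by
      simp [hκ, LinearMap.mulRight_apply]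
    have huv : ∀ x : L, x * u * v = x := fun x => by
      rw [hu, mul_assoc, inv_mul_cancel₀ hv0, mul_one]
    set g : W →ₗ[K] L := κ ∘ₗ W.subtype with hg
    have hrange : LinearMap.range g ≤ LinearMap.ker (skewMap θ Q) := by
      rintro _ ⟨x, rfl⟩
      rw [LinearMap.mem_ker, skewMap_apply, hg, LinearMap.comp_apply,
        Submodule.subtype_apply, hκa, key ((x : L) * u), huv]
      rw [← skewMap_apply]
      exact x.2
    have hker : finrank K (LinearMap.ker g) ≤ 1 := by
      have hmap : (LinearMap.ker g).map W.subtype ≤ Submodule.span K {v} := by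
        rintro _ ⟨x, hx, rfl⟩
        have hx0 : κ (x : L) = 0 := hx
        rw [hκa, sub_eq_zero] at hx0
        obtain ⟨c, hc⟩ := hfix _ hx0
        have hxc : (x : L) = c • v := by
          rw [Algebra.smul_def]
          calc (x : L) = (x : L) * u * v := (huv _).symm
          _ = algebraMap K L c * v := by rw [hc]
        rw [Submodule.subtype_apply, hxc]
        exact Submodule.smul_mem _ _ (Submodule.mem_span_singleton_self v)
      calc finrank K (LinearMap.ker g)
          = finrank K ((LinearMap.ker g).map W.subtype) :=
            LinearEquiv.finrank_eq (Submodule.equivMapOfInjective W.subtype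
              (Submodule.injective_subtype W) (LinearMap.ker g))
        _ ≤ finrank K (Submodule.span K {v} : Submodule K L) :=
            Submodule.finrank_mono hmap
        _ = 1 := finrank_span_singleton hv0
    have hrange' : finrank K (LinearMap.range g) ≤ d := by
      refine le_trans (Submodule.finrank_mono hrange) ?_
      exact IH Q hQne (le_trans hQdeg (by omega))
    have := LinearMap.finrank_range_add_finrank_ker g
    have hfr : finrank K W = finrank K (LinearMap.range g) + finrank K (LinearMap.ker g) :=
      this.symm
    omega
lemma le_ker_skewMap_of_vanish {P : Polynomial L} {V : Submodule K L}
    (h : ∀ x ∈ V, skewEval θ P x = 0) : V ≤ LinearMap.ker (skewMap θ P) := fun x hx => by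
  rw [LinearMap.mem_ker, skewMap_apply]; exact h x hx

theorem core_exists_unique [FiniteDimensional K L]
    (hfix : ∀ x : L, θ x = x → ∃ c : K, algebraMap K L c = x)
    (s : ℕ) (V : Submodule K L) (hV : finrank K V = s) :
    ∃! P : Polynomial L, P.Monic ∧ P.natDegree = s ∧
      ∀ x ∈ V, skewEval θ P x = 0 := by
  have b : Basis (Fin s) K V := (Module.finBasis K V).reindex (finCongr hV)
  -- the evaluation L-linear map on coefficient vectors
  set Φ : (Fin (s + 1) → L) →ₗ[L] (Fin s → L) :=
    { toFun := fun c => fun j => ∑ i : Fin (s + 1), c i * (θ ^ (i : ℕ)) (b j : L)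
      map_add' := fun c c' => by
        funext j; simp [add_mul, Finset.sum_add_distrib]
      map_smul' := fun a c => by
        funext j; simp [smul_eq_mul, mul_assoc, Finset.mul_sum] } with hΦ
  -- Φ has nontrivial kernel
  have hkerΦ : LinearMap.ker Φ ≠ ⊥ := by
    intro hbot
    have h1 := LinearMap.finrank_range_add_finrank_ker Φ
    rw [hbot] at h1
    have h2 : finrank L (LinearMap.range Φ) ≤ s := by
      have := Submodule.finrank_le (LinearMap.range Φ)
      rwa [finrank_fin_fun] at this
    rw [finrank_bot, add_zero, finrank_fin_fun] at h1
    omega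
  obtain ⟨c, hcΦ, hc0⟩ := (Submodule.ne_bot_iff _).mp hkerΦ
  rw [LinearMap.mem_ker] at hcΦ
  set P₀ : Polynomial L := ∑ i : Fin (s + 1), C (c i) * X ^ (i : ℕ) with hP₀
  have coeffP₀ : ∀ i : Fin (s + 1), P₀.coeff (i : ℕ) = c i := by
    intro i
    rw [hP₀, finset_sum_coeff]
    simp only [coeff_C_mul, coeff_X_pow, mul_ite, mul_one, mul_zero]
    rw [Finset.sum_eq_single i (fun j _ hj => by
      rw [if_neg (fun h => hj (by exact_mod_cast (Fin.val_inj.mp h.symm)))]) (by simp)]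
    simp
  have degP₀ : P₀.natDegree ≤ s := by
    apply Polynomial.natDegree_sum_le_of_forall_le
    intro i _
    refine le_trans (natDegree_C_mul_le _ _) ?_
    rw [natDegree_X_pow]
    exact Nat.lt_succ_iff.mp i.isLt
  have P₀ne : P₀ ≠ 0 := by
    obtain ⟨i, hi⟩ := Function.ne_iff.mp hc0
    exact fun h => hi (by rw [Pi.zero_apply, ← coeffP₀ i, h, coeff_zero])
  have vanish₀ : ∀ x ∈ V, skewEval θ P₀ x = 0 := by
    have hbj : ∀ j : Fin s, skewEval θ P₀ ((b j : L)) = 0 := by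
      intro j
      rw [skewEval_eq_sum_range θ (lt_of_le_of_lt degP₀ (Nat.lt_succ_self s)),
        Finset.sum_range fun i => P₀.coeff i * (θ ^ i) (b j : L)]
      have : ∀ i : Fin (s + 1), P₀.coeff (i : ℕ) * (θ ^ (i : ℕ)) (b j : L)
          = c i * (θ ^ (i : ℕ)) (b j : L) := fun i => by rw [coeffP₀]
      rw [Finset.sum_congr rfl fun i _ => this i]
      exact congrFun hcΦ j
    have hVle : V ≤ LinearMap.ker (skewMap θ P₀) := by
      have hVspan : V = Submodule.span K (V.subtype '' Set.range b) := by
        rw [← Submodule.map_span, Basis.span_eq, Submodule.map_top, Submodule.range_subtype]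
      rw [hVspan]
      rw [Submodule.span_le]
      rintro _ ⟨_, ⟨j, rfl⟩, rfl⟩
      rw [SetLike.mem_coe, LinearMap.mem_ker, Submodule.subtype_apply, skewMap_apply]
      exact hbj j
    intro x hx
    rw [← skewMap_apply]
    exact hVle hx
  -- degree is exactly s
  have hdeg₀ : P₀.natDegree = s := by
    have h1 : s ≤ finrank K (LinearMap.ker (skewMap θ P₀)) := by
      rw [← hV]
      exact Submodule.finrank_mono (le_ker_skewMap_of_vanish θ vanish₀)
    have h2 := finrank_ker_skewMap_le θ hfix P₀.natDegree P₀ P₀ne le_rfl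
    omega
  -- normalize
  set P : Polynomial L := C P₀.leadingCoeff⁻¹ * P₀ with hP
  have hlc : P₀.leadingCoeff ≠ 0 := leadingCoeff_ne_zero.mpr P₀ne
  have hPmonic : P.Monic := monic_C_mul_of_mul_leadingCoeff_eq_one (by
    rw [inv_mul_cancel₀ hlc])
  have hPdeg : P.natDegree = s := by
    rw [hP, natDegree_C_mul (inv_ne_zero hlc), hdeg₀]
  have hPvanish : ∀ x ∈ V, skewEval θ P x = 0 := fun x hx => by
    rw [hP, skewEval_C_mul, vanish₀ x hx, mul_zero]
  refine ⟨P, ⟨hPmonic, hPdeg, hPvanish⟩, ?_⟩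
  -- uniqueness
  rintro P' ⟨h'm, h'd, h'v⟩
  by_contra hne
  have hD : P' - P ≠ 0 := sub_ne_zero.mpr hne
  have hDdeg : (P' - P).natDegree ≤ s :=
    le_trans (natDegree_sub_le _ _) (by rw [h'd, hPdeg]; omega)
  have hDcoeff : (P' - P).coeff s = 0 := by
    rw [coeff_sub]
    have e1 : P'.coeff s = 1 := by rw [← h'd]; exact h'm.coeff_natDegree
    have e2 : P.coeff s = 1 := by rw [← hPdeg]; exact hPmonic.coeff_natDegree
    rw [e1, e2, sub_self]
  have hDlt : (P' - P).natDegree < s := by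
    by_contra hlt
    have h : (P' - P).natDegree = s := le_antisymm hDdeg (not_lt.mp hlt)
    exact hD (leadingCoeff_eq_zero.mp (by rw [leadingCoeff, h, hDcoeff]))
  have hDvan : ∀ x ∈ V, skewEval θ (P' - P) x = 0 := fun x hx => by
    rw [skewEval_sub, h'v x hx, hPvanish x hx, sub_self]
  have h1 : s ≤ finrank K (LinearMap.ker (skewMap θ (P' - P))) := by
    rw [← hV]; exact Submodule.finrank_mono (le_ker_skewMap_of_vanish θ hDvan)
  have h2 := finrank_ker_skewMap_le θ hfix (P' - P).natDegree _ hD le_rfl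
  omega
lemma fix_of_gen [FiniteDimensional K L] [IsGalois K L]
    (hgen : ∀ σ : L ≃ₐ[K] L, σ ∈ Subgroup.zpowers θ) :
    ∀ x : L, θ x = x → ∃ c : K, algebraMap K L c = x := by
  intro x hx
  have hall : ∀ σ : L ≃ₐ[K] L, σ x = x := by
    intro σ
    have hθ : θ ∈ MulAction.stabilizer (L ≃ₐ[K] L) x := by
      rw [MulAction.mem_stabilizer_iff]; exact hx
    have hσ : σ ∈ MulAction.stabilizer (L ≃ₐ[K] L) x :=
      (Subgroup.zpowers_le.mpr hθ) (hgen σ)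
    exact hσ
  have hmem : x ∈ IntermediateField.fixedField (⊤ : Subgroup (L ≃ₐ[K] L)) := fun g => hall g
  rw [← IntermediateField.fixingSubgroup_bot (F := K) (E := L),
    IsGalois.fixedField_fixingSubgroup (⊥ : IntermediateField K L)] at hmem
  exact IntermediateField.mem_bot.mp hmem
end Basic

section Infinite
variable {K L : Type*} [Field K] [Field L] [Algebra K L] (θ : L ≃ₐ[K] L) [IsGalois K L]

lemma restrict_coe (E : IntermediateField K L) [Normal K E] (σ : L ≃ₐ[K] L) (y : E) :
    ((AlgEquiv.restrictNormalHom ↥E σ) y : L) = σ (y : L) := by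
  exact AlgEquiv.restrictNormal_commutes σ ↥E y

lemma restrict_zpow_coe (E : IntermediateField K L) [Normal K E] (k : ℤ) (y : E) :
    (((AlgEquiv.restrictNormalHom ↥E θ) ^ k) y : L) = (θ ^ k) (y : L) := by
  have h : (AlgEquiv.restrictNormalHom ↥E θ) ^ k
      = AlgEquiv.restrictNormalHom ↥E (θ ^ k) := (map_zpow _ θ k).symm
  rw [h]
  exact restrict_coe E (θ ^ k) y

lemma restrict_pow_coe (E : IntermediateField K L) [Normal K E] (m : ℕ) (y : E) :
    (((AlgEquiv.restrictNormalHom ↥E θ) ^ m) y : L) = (θ ^ m) (y : L) := by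
  have h : (AlgEquiv.restrictNormalHom ↥E θ) ^ m
      = AlgEquiv.restrictNormalHom ↥E (θ ^ m) := (map_pow _ θ m).symm
  rw [h]
  exact restrict_coe E (θ ^ m) y

lemma order_restrict (hgen : ∀ σ : L ≃ₐ[K] L, σ ∈ Subgroup.zpowers θ)
    (E : FiniteGaloisIntermediateField K L) :
    orderOf (AlgEquiv.restrictNormalHom ↥(E : IntermediateField K L) θ)
      = finrank K (E : IntermediateField K L) := by
  set τ := AlgEquiv.restrictNormalHom ↥(E : IntermediateField K L) θ with hτ
  have hsurj : ∀ τ' : (E : IntermediateField K L) ≃ₐ[K] (E : IntermediateField K L),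
      τ' ∈ Subgroup.zpowers τ := by
    intro τ'
    obtain ⟨σ, rfl⟩ := AlgEquiv.restrictNormalHom_surjective L τ'
    obtain ⟨k, rfl⟩ := Subgroup.mem_zpowers_iff.mp (hgen σ)
    exact ⟨k, by
      show τ ^ k = _
      rw [hτ]
      exact (map_zpow (AlgEquiv.restrictNormalHom ↥(E : IntermediateField K L)) θ k).symm⟩
  have htop : Subgroup.zpowers τ = ⊤ := by
    rw [eq_top_iff]; exact fun τ' _ => hsurj τ'
  letI := AlgEquiv.fintype K (E : IntermediateField K L)
  calc orderOf τ = Nat.card (Subgroup.zpowers τ) := (Nat.card_zpowers τ).symm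
    _ = Nat.card ((E : IntermediateField K L) ≃ₐ[K] (E : IntermediateField K L)) := by
        rw [htop]; exact Nat.card_congr Subgroup.topEquiv.toEquiv
    _ = finrank K (E : IntermediateField K L) := by
        rw [IsGalois.card_aut_eq_finrank]

lemma step_lemma (hgen : ∀ σ : L ≃ₐ[K] L, σ ∈ Subgroup.zpowers θ)
    (hn : finrank K L = 0) (E : FiniteGaloisIntermediateField K L) (a k : ℤ) :
    ∃ (E' : FiniteGaloisIntermediateField K L) (a' : ℤ), E ≤ E' ∧
      (∀ y ∈ (E : IntermediateField K L), (θ ^ a') y = (θ ^ a) y) ∧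
      (∃ y ∈ (E' : IntermediateField K L), (θ ^ k) y ≠ (θ ^ a') y) := by
  classical
  -- find an element outside E
  have hex : ∃ x : L, x ∉ (E : IntermediateField K L) := by
    by_contra h
    push_neg at h
    have htop : (E : IntermediateField K L) = ⊤ := by
      rw [eq_top_iff]; exact fun x _ => h x
    have : FiniteDimensional K (⊤ : IntermediateField K L) := htop ▸ E.finiteDimensional
    have : FiniteDimensional K L :=
      Module.Finite.equiv IntermediateField.topEquiv.toLinearEquiv
    have := Module.finrank_pos (R := K) (M := L)
    omega
  obtain ⟨x, hx⟩ := hex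
  letI : Finite ({x} : Set L) := Set.finite_singleton x |>.to_subtype
  set E' : FiniteGaloisIntermediateField K L :=
    E ⊔ FiniteGaloisIntermediateField.adjoin K {x} with hE'
  have hle : E ≤ E' := le_sup_left
  have hxE' : x ∈ (E' : IntermediateField K L) := by
    have h1 : x ∈ (FiniteGaloisIntermediateField.adjoin K {x} : IntermediateField K L) :=
      FiniteGaloisIntermediateField.subset_adjoin K {x} rfl
    exact ((FiniteGaloisIntermediateField.le_iff _ _).mp (le_sup_right :
      FiniteGaloisIntermediateField.adjoin K {x} ≤ E')) h1
  have hlt : (E : IntermediateField K L) < (E' : IntermediateField K L) :=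
    lt_of_le_of_ne hle (fun h => hx (h ▸ hxE'))
  -- ranks
  set τ := AlgEquiv.restrictNormalHom ↥(E : IntermediateField K L) θ with hτdef
  set τ' := AlgEquiv.restrictNormalHom ↥(E' : IntermediateField K L) θ with hτ'def
  have hdd : orderOf τ < orderOf τ' := by
    rw [hτdef, hτ'def, order_restrict θ hgen E, order_restrict θ hgen E']
    have h1 : Subalgebra.toSubmodule (E : IntermediateField K L).toSubalgebra
        < Subalgebra.toSubmodule (E' : IntermediateField K L).toSubalgebra := by
      refine lt_of_le_of_ne ?_ ?_
      · intro z hz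
        rw [Subalgebra.mem_toSubmodule, IntermediateField.mem_toSubalgebra] at hz ⊢
        exact hle hz
      · intro h
        apply hx
        have : x ∈ Subalgebra.toSubmodule (E : IntermediateField K L).toSubalgebra := by
          rw [h, Subalgebra.mem_toSubmodule, IntermediateField.mem_toSubalgebra]
          exact hxE'
        rwa [Subalgebra.mem_toSubmodule, IntermediateField.mem_toSubalgebra] at this
    haveI hfd : FiniteDimensional K ↥(E' : IntermediateField K L).toSubalgebra :=
      E'.finiteDimensional
    haveI : FiniteDimensional K
        ↥(Subalgebra.toSubmodule (E' : IntermediateField K L).toSubalgebra) :=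
      Module.Finite.equiv (Subalgebra.toSubmoduleEquiv
        (E' : IntermediateField K L).toSubalgebra).symm
    have h2 := Submodule.finrank_lt_finrank_of_lt h1
    rwa [Subalgebra.finrank_toSubmodule, Subalgebra.finrank_toSubmodule] at h2
  have h0 : 0 < orderOf τ := by
    rw [hτdef, order_restrict θ hgen E]
    exact Module.finrank_pos
  set dE := orderOf τ with hdE
  have hτ'dE : τ' ^ dE ≠ 1 := by
    intro h
    have := orderOf_le_of_pow_eq_one h0 h
    omega
  -- choose a'
  have hchoice : ∃ a' : ℤ, (∀ y ∈ (E : IntermediateField K L), (θ ^ a') y = (θ ^ a) y) ∧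
      τ' ^ k ≠ τ' ^ a' := by
    have hcompatbase : ∀ y ∈ (E : IntermediateField K L),
        (θ ^ (a + (dE : ℤ))) y = (θ ^ a) y := by
      intro y hy
      have hfix : (τ ^ dE) ⟨y, hy⟩ = ⟨y, hy⟩ := by
        rw [hdE, pow_orderOf_eq_one τ]; rfl
      have hptw := restrict_pow_coe θ (E : IntermediateField K L) dE ⟨y, hy⟩
      rw [← hτdef] at hptw
      rw [hfix] at hptw
      rw [zpow_add, AlgEquiv.mul_apply, zpow_natCast, ← hptw]
    by_cases hc : τ' ^ k = τ' ^ a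
    · refine ⟨a + (dE : ℤ), hcompatbase, ?_⟩
      intro h
      apply hτ'dE
      have h2 : τ' ^ a * τ' ^ ((dE : ℕ) : ℤ) = τ' ^ a * 1 := by
        rw [mul_one, ← zpow_add, ← h, hc]
      have h3 := mul_left_cancel h2
      rwa [zpow_natCast] at h3
    · exact ⟨a, fun y _ => rfl, hc⟩
  obtain ⟨a', hcompat, hne⟩ := hchoice
  refine ⟨E', a', hle, hcompat, ?_⟩
  -- pointwise defeat
  have hne' : ∃ y : (E' : IntermediateField K L), (τ' ^ k) y ≠ (τ' ^ a') y := by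
    by_contra h
    push_neg at h
    exact hne (AlgEquiv.ext h)
  obtain ⟨y, hy⟩ := hne'
  refine ⟨(y : L), y.2, ?_⟩
  have e1 := restrict_zpow_coe θ (E' : IntermediateField K L) k y
  have e2 := restrict_zpow_coe θ (E' : IntermediateField K L) a' y
  rw [← hτ'def] at e1 e2
  rw [← e1, ← e2]
  exact fun h => hy (Subtype.coe_injective h)
lemma no_infinite_cyclic (hgen : ∀ σ : L ≃ₐ[K] L, σ ∈ Subgroup.zpowers θ)
    (hn : finrank K L = 0) : False := by
  classical
  set e : ℕ → ℤ := fun n => (Denumerable.eqv ℤ).symm n with he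
  choose nextE nextA hle hcompat hdefeat using step_lemma θ hgen hn
  set F : ℕ → FiniteGaloisIntermediateField K L × ℤ :=
    fun n => Nat.rec (⊥, 0) (fun n p => (nextE p.1 p.2 (e n), nextA p.1 p.2 (e n))) n with hF
  have hFsucc : ∀ n, F (n + 1) = (nextE (F n).1 (F n).2 (e n), nextA (F n).1 (F n).2 (e n)) :=
    fun n => rfl
  -- monotonicity
  have hstep : ∀ n, (F n).1 ≤ (F (n + 1)).1 := fun n => by rw [hFsucc]; exact hle _ _ _
  have hmono : Monotone fun n => ((F n).1 : IntermediateField K L) := by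
    apply monotone_nat_of_le_succ
    intro n
    exact hstep n
  -- agreement of the θ-powers on lower levels
  have hagree : ∀ i j, i ≤ j → ∀ y ∈ ((F i).1 : IntermediateField K L),
      (θ ^ (F j).2) y = (θ ^ (F i).2) y := by
    intro i j hij
    induction j, hij using Nat.le_induction with
    | base => intro y _; rfl
    | succ j hij IH =>
      intro y hy
      have hyj : y ∈ ((F j).1 : IntermediateField K L) := hmono hij hy
      have h1 : (θ ^ (F (j + 1)).2) y = (θ ^ (F j).2) y := by
        rw [hFsucc]
        exact hcompat (F j).1 (F j).2 (e j) y hyj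
      rw [h1]
      exact IH y hy
  have hagree2 : ∀ i j y, y ∈ ((F i).1 : IntermediateField K L) →
      y ∈ ((F j).1 : IntermediateField K L) →
      (θ ^ (F i).2) y = (θ ^ (F j).2) y := by
    intro i j y hyi hyj
    have h1 := hagree i (max i j) (le_max_left i j) y hyi
    have h2 := hagree j (max i j) (le_max_right i j) y hyj
    rw [← h1, ← h2]
  -- glue
  set S : ℕ → Subalgebra K L := fun n => ((F n).1 : IntermediateField K L).toSubalgebra with hS
  have hSmono : Monotone S := fun i j hij => hmono hij
  have hdir : Directed (· ≤ ·) S := hSmono.directed_le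
  set f : ∀ n, S n →ₐ[K] L :=
    fun n => ((θ ^ (F n).2).toAlgHom).comp (S n).val with hf
  have hfc : ∀ (i j : ℕ) (h : S i ≤ S j), f i = (f j).comp (Subalgebra.inclusion h) := by
    intro i j h
    apply AlgHom.ext
    intro y
    have hyi : (y : L) ∈ ((F i).1 : IntermediateField K L) := y.2
    have hyj : (y : L) ∈ ((F j).1 : IntermediateField K L) := h y.2
    exact hagree2 i j (y : L) hyi hyj
  set T : IntermediateField K L := ⨆ n, ((F n).1 : IntermediateField K L) with hT
  have hTsub : T.toSubalgebra = ⨆ n, S n := by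
    rw [hT]
    exact IntermediateField.toSubalgebra_iSup_of_directed
      (hmono.directed_le)
  set g : T →ₐ[K] L :=
    (Subalgebra.iSupLift S hdir f hfc _ le_rfl).comp (Subalgebra.equivOfEq _ _ hTsub).toAlgHom with hg
  have hgval : ∀ (n : ℕ) (y : L) (hyn : y ∈ ((F n).1 : IntermediateField K L)) (hyT : y ∈ T),
      g ⟨y, hyT⟩ = (θ ^ (F n).2) y := by
    intro n y hyn hyT
    have hymem : y ∈ (⨆ k, S k : Subalgebra K L) := by rw [← hTsub]; exact hyT
    have h0 : g ⟨y, hyT⟩ = Subalgebra.iSupLift S hdir f hfc _ le_rfl ⟨y, hymem⟩ := rfl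
    have h3 := Subalgebra.iSupLift_of_mem (K := S) (dir := hdir) (f := f) (hf := hfc)
      (T := iSup S) (hT := le_rfl) (i := n) ⟨y, hymem⟩ (by exact hyn)
    exact h0.trans (h3.trans rfl)
  -- extend to an automorphism of L
  have hK' : ∀ s : L, IsIntegral K s ∧ ((minpoly K s).map (algebraMap K L)).Splits :=
    fun s => ⟨(IsGalois.to_normal (F := K) (E := L)).isIntegral s,
      (IsGalois.to_normal (F := K) (E := L)).splits s⟩
  obtain ⟨φ, hφ⟩ := IntermediateField.exists_algHom_of_splits hK' g
  set ψ : L ≃ₐ[K] L := AlgEquiv.ofBijective φ (AlgHom.normal_bijective K L L φ) with hψ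
  obtain ⟨m, hm⟩ := Subgroup.mem_zpowers_iff.mp (hgen ψ)
  -- defeat at the right level
  set n : ℕ := Denumerable.eqv ℤ m with hn'
  have hen : e n = m := by rw [he, hn']; simp
  have hE1 : (F (n + 1)).1 = nextE (F n).1 (F n).2 (e n) := by rw [hFsucc]
  have hA1 : (F (n + 1)).2 = nextA (F n).1 (F n).2 (e n) := by rw [hFsucc]
  obtain ⟨y, hy, hne⟩ := by
    have h4 := hdefeat (F n).1 (F n).2 (e n)
    rw [← hE1, ← hA1] at h4
    exact h4
  have hyT : y ∈ T := by
    rw [hT]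
    exact (le_iSup (fun n => ((F n).1 : IntermediateField K L)) (n + 1)) hy
  have h1 : φ y = (θ ^ (F (n + 1)).2) y := by
    have := congrArg (fun (h : T →ₐ[K] L) => h ⟨y, hyT⟩) hφ
    simpa using (this.trans (hgval (n + 1) y hy hyT))
  have h2 : φ y = (θ ^ m) y := by
    rw [hm]
    rfl
  rw [hen] at hne
  exact hne (h2.symm.trans h1)
end Infinite

/-- For every `s`-dimensional `K`-subspace `V` of `L` there is a unique monic
θ-polynomial `P_V` of θ-degree exactly `s` vanishing on all of `V`. -/
theorem exists_unique_monic_annihilator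
    {K L : Type*} [Field K] [Field L] [Algebra K L] [IsGalois K L]
    (n : ℕ) (hn : Module.finrank K L = n)
    (θ : L ≃ₐ[K] L) (hord : orderOf θ = n)
    (hgen : ∀ σ : L ≃ₐ[K] L, σ ∈ Subgroup.zpowers θ)
    (s : ℕ) (hs : s ≤ n) (V : Submodule K L) (hV : Module.finrank K V = s) :
    ∃! P : Polynomial L, P.Monic ∧ P.natDegree = s ∧
      ∀ x ∈ V, skewEval θ P x = 0 := by
  rcases Nat.eq_zero_or_pos n with hn0 | hnpos
  · exact absurd (no_infinite_cyclic θ hgen (by rw [hn, hn0])) not_false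
  · haveI : FiniteDimensional K L := Module.finite_of_finrank_pos (by omega)
    exact core_exists_unique θ (fix_of_gen θ hgen) s V hV
end

section
/- For c ∈ L^n, the set I_c = {P ∈ L[Z;θ] : P(c_i) = 0 for i = 1,...,n} is a left ideal of the skew polynomial ring L[Z;θ], and the θ-degree of its monic generator of minimal degree equals the rank weight of c. -/
open Polynomial

/-- The skew product of θ-polynomials. -/
noncomputable def skewMul {K L : Type*} [Field K] [Field L] [Algebra K L]
    (θ : L ≃ₐ[K] L) (P Q : Polynomial L) : Polynomial L :=
  P.sum fun i a => Q.sum fun j b => Polynomial.monomial (i + j) (a * (θ ^ i) b)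

section Helpers

variable {K L : Type*} [Field K] [Field L] [Algebra K L] (θ : L ≃ₐ[K] L)

/-- skew evaluation at a fixed point, as an additive monoid hom in the polynomial. -/
noncomputable def skewEvalHom (x : L) : Polynomial L →+ L where
  toFun P := skewEval θ P x
  map_zero' := by simp [skewEval]
  map_add' P Q :=
    Polynomial.sum_add_index P Q (fun i a => a * (θ ^ i) x)
      (fun i => zero_mul _) (fun i b₁ b₂ => add_mul _ _ _)

lemma skewEvalHom_apply (x : L) (P : Polynomial L) : skewEvalHom θ x P = skewEval θ P x := rfl

lemma skewEval_over_range (P : Polynomial L) (x : L) {N : ℕ} (h : P.natDegree < N) :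
    skewEval θ P x = ∑ i ∈ Finset.range N, P.coeff i * (θ ^ i) x :=
  Polynomial.sum_over_range' P (by simp) N h

lemma skewEval_monomial (i : ℕ) (a : L) (x : L) :
    skewEval θ (Polynomial.monomial i a) x = a * (θ ^ i) x :=
  Polynomial.sum_monomial_index a _ (by simp)

lemma skewEval_zero_right (P : Polynomial L) : skewEval θ P 0 = 0 := by
  simp [skewEval, Polynomial.sum_def]

lemma skewEval_skewMul (R P : Polynomial L) (x : L) :
    skewEval θ (skewMul θ R P) x = skewEval θ R (skewEval θ P x) := by
  rw [← skewEvalHom_apply, skewMul, Polynomial.sum_def, map_sum]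
  have : ∀ i ∈ R.support,
      skewEvalHom θ x (P.sum fun j b => Polynomial.monomial (i + j) (R.coeff i * (θ ^ i) b))
        = R.coeff i * (θ ^ i) (skewEval θ P x) := by
    intro i _
    rw [Polynomial.sum_def, map_sum]
    have : ∀ j ∈ P.support,
        skewEvalHom θ x (Polynomial.monomial (i + j) (R.coeff i * (θ ^ i) (P.coeff j)))
          = R.coeff i * (θ ^ i) (P.coeff j * (θ ^ j) x) := by
      intro j _
      rw [skewEvalHom_apply, skewEval_monomial, pow_add, AlgEquiv.mul_apply, map_mul, mul_assoc]
    rw [Finset.sum_congr rfl this, ← Finset.mul_sum, skewEval, Polynomial.sum_def, ← map_sum]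
  rw [Finset.sum_congr rfl this]
  rfl

/-- Skew evaluation as a `K`-linear map in the point. -/
noncomputable def skewEvalL (P : Polynomial L) : L →ₗ[K] L where
  toFun x := skewEval θ P x
  map_add' x y := by
    unfold skewEval
    rw [Polynomial.sum_def, Polynomial.sum_def, Polynomial.sum_def, ← Finset.sum_add_distrib]
    exact Finset.sum_congr rfl fun i _ => by rw [map_add, mul_add]
  map_smul' k x := by
    unfold skewEval
    rw [RingHom.id_apply, Polynomial.sum_def, Polynomial.sum_def, Finset.smul_sum]
    refine Finset.sum_congr rfl fun i _ => ?_
    rw [map_smul, mul_smul_comm]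

lemma skewEvalL_apply (P : Polynomial L) (x : L) : skewEvalL θ P x = skewEval θ P x := rfl

lemma finrank_ker_comp_le [FiniteDimensional K L] (f g : L →ₗ[K] L) :
    Module.finrank K (LinearMap.ker (f ∘ₗ g)) ≤
      Module.finrank K (LinearMap.ker f) + Module.finrank K (LinearMap.ker g) := by
  set W := LinearMap.ker (f ∘ₗ g) with hW
  have h1 := LinearMap.finrank_range_add_finrank_ker (g.domRestrict W)
  have h2 : LinearMap.range (g.domRestrict W) ≤ LinearMap.ker f := by
    rintro _ ⟨⟨x, hx⟩, rfl⟩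
    exact hx
  have h3 : Module.finrank K (LinearMap.ker (g.domRestrict W)) ≤
      Module.finrank K (LinearMap.ker g) := by
    have : Function.Injective
        (LinearMap.codRestrict (LinearMap.ker g)
            ((W.subtype).comp (LinearMap.ker (g.domRestrict W)).subtype)
            (fun x => x.2)) := by
      intro a b hab
      apply Subtype.ext; apply Subtype.ext
      have := congrArg Subtype.val hab
      exact this
    exact LinearMap.finrank_le_finrank_of_injective this
  calc Module.finrank K W
      = Module.finrank K (LinearMap.range (g.domRestrict W)) +
        Module.finrank K (LinearMap.ker (g.domRestrict W)) := h1.symm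
    _ ≤ _ := add_le_add (Submodule.finrank_mono h2) h3

lemma skewEval_C_mul_s8 (a : L) (S : Polynomial L) (y : L) :
    skewEval θ (Polynomial.C a * S) y = a * skewEval θ S y := by
  rw [skewEval_over_range θ (Polynomial.C a * S) y (N := S.natDegree + 1)
      (lt_of_le_of_lt (Polynomial.natDegree_C_mul_le a S) (Nat.lt_succ_self _)),
      skewEval_over_range θ S y (Nat.lt_succ_self _), Finset.mul_sum]
  exact Finset.sum_congr rfl fun i _ => by rw [Polynomial.coeff_C_mul, mul_assoc]

lemma skewEval_geom (i : ℕ) (y : L) :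
    skewEval θ (∑ j ∈ Finset.range i, (Polynomial.X : Polynomial L) ^ j) y
      = ∑ j ∈ Finset.range i, (θ ^ j) y := by
  rw [← skewEvalHom_apply, map_sum]
  refine Finset.sum_congr rfl fun j _ => ?_
  rw [skewEvalHom_apply, Polynomial.X_pow_eq_monomial, skewEval_monomial, one_mul]

lemma geom_coeff (i k : ℕ) :
    (∑ j ∈ Finset.range i, (Polynomial.X : Polynomial L) ^ j).coeff k
      = if k < i then 1 else 0 := by
  rw [Polynomial.finset_sum_coeff]
  simp [Polynomial.coeff_X_pow, Finset.sum_ite_eq, Finset.mem_range]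

lemma finrank_ker_skewEvalL_le [FiniteDimensional K L]
    (hfix : ∀ x : L, θ x = x → ∃ k : K, algebraMap K L k = x) :
    ∀ m : ℕ, ∀ P : Polynomial L, P ≠ 0 → P.natDegree = m →
      Module.finrank K (LinearMap.ker (skewEvalL θ P)) ≤ m := by
  intro m
  induction m using Nat.strong_induction_on with
  | _ m IH =>
  intro P hP hm
  by_cases hker : LinearMap.ker (skewEvalL θ P) = ⊥
  · rw [hker, finrank_bot]; exact Nat.zero_le m
  obtain ⟨v, hv, hv0⟩ := Submodule.exists_mem_ne_zero_of_ne_bot hker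
  have hv' : skewEval θ P v = 0 := hv
  have hm1 : 1 ≤ m := by
    rcases Nat.eq_zero_or_pos m with h0 | h
    · exfalso
      have hev : skewEval θ P v = P.coeff 0 * v := by
        rw [skewEval_over_range θ P v (N := 1) (by omega), Finset.sum_range_one, pow_zero,
          AlgEquiv.one_apply]
      rw [hv'] at hev
      have hc : P.coeff 0 ≠ 0 := by
        have := Polynomial.leadingCoeff_ne_zero.mpr hP
        rwa [Polynomial.leadingCoeff, hm, h0] at this
      exact hv0 ((mul_eq_zero.mp hev.symm).resolve_left hc)
    · exact h
  set Q : Polynomial L := ∑ i ∈ Finset.range (m+1),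
      Polynomial.C (P.coeff i * (θ^i) v) *
        (∑ j ∈ Finset.range i, (Polynomial.X : Polynomial L)^j) with hQ
  have hQdeg : Q.natDegree ≤ m - 1 := by
    apply Polynomial.natDegree_sum_le_of_forall_le
    intro i hi
    apply le_trans (Polynomial.natDegree_C_mul_le _ _)
    apply Polynomial.natDegree_sum_le_of_forall_le
    intro j hj
    rw [Polynomial.natDegree_X_pow]
    have h1 : j < i := Finset.mem_range.mp hj
    have h2 : i < m + 1 := Finset.mem_range.mp hi
    omega
  have hQc : Q.coeff (m-1) = P.leadingCoeff * (θ^m) v := by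
    rw [hQ, Polynomial.finset_sum_coeff]
    have hterm : ∀ i ∈ Finset.range (m+1),
        (Polynomial.C (P.coeff i * (θ^i) v) *
          (∑ j ∈ Finset.range i, (Polynomial.X : Polynomial L)^j)).coeff (m-1)
        = if i = m then P.coeff m * (θ^m) v else 0 := by
      intro i hi
      rw [Polynomial.coeff_C_mul, geom_coeff]
      rcases eq_or_ne i m with rfl | hne
      · rw [if_pos (by omega), if_pos rfl, mul_one]
      · rw [if_neg (by have := Finset.mem_range.mp hi; omega), if_neg hne, mul_zero]
    rw [Finset.sum_congr rfl hterm, Finset.sum_ite_eq' (Finset.range (m+1)) m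
        (fun _ => P.coeff m * (θ^m) v), if_pos (Finset.mem_range.mpr (by omega))]
    rw [Polynomial.leadingCoeff, hm]
  have hQ0 : Q ≠ 0 := by
    intro h
    have hl : P.leadingCoeff ≠ 0 := Polynomial.leadingCoeff_ne_zero.mpr hP
    have hθv : (θ^m) v ≠ 0 := fun hh =>
      hv0 ((θ^m).injective (hh.trans (map_zero (θ^m)).symm))
    rw [h, Polynomial.coeff_zero] at hQc
    exact (mul_ne_zero hl hθv) hQc.symm
  have hkey : ∀ x : L, skewEval θ Q (θ x - x) = skewEval θ P (v * x) := by
    intro x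
    have h1 : skewEval θ Q (θ x - x) = ∑ i ∈ Finset.range (m+1),
        P.coeff i * (θ^i) v * ((θ^i) x - x) := by
      rw [hQ, ← skewEvalHom_apply, map_sum]
      refine Finset.sum_congr rfl fun i _ => ?_
      rw [skewEvalHom_apply, skewEval_C_mul_s8, skewEval_geom]
      congr 1
      have hterm : ∀ j, (θ^j) (θ x - x) = (θ^(j+1)) x - (θ^j) x := by
        intro j
        rw [map_sub, ← AlgEquiv.mul_apply, ← pow_succ]
      rw [Finset.sum_congr rfl (fun j _ => hterm j),
        Finset.sum_range_sub (fun j => (θ^j) x), pow_zero, AlgEquiv.one_apply]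
    rw [h1]
    have h2 : skewEval θ P (v * x) = ∑ i ∈ Finset.range (m+1), P.coeff i * (θ^i) (v*x) :=
      skewEval_over_range θ P _ (by omega)
    have h3 : skewEval θ P v = ∑ i ∈ Finset.range (m+1), P.coeff i * (θ^i) v :=
      skewEval_over_range θ P _ (by omega)
    calc ∑ i ∈ Finset.range (m+1), P.coeff i * (θ^i) v * ((θ^i) x - x)
        = (∑ i ∈ Finset.range (m+1), P.coeff i * (θ^i) (v*x)) -
          (∑ i ∈ Finset.range (m+1), P.coeff i * (θ^i) v) * x := by
          rw [Finset.sum_mul, ← Finset.sum_sub_distrib]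
          refine Finset.sum_congr rfl fun i _ => ?_
          rw [map_mul]; ring
      _ = skewEval θ P (v * x) := by rw [← h2, ← h3, hv', zero_mul, sub_zero]
  let e : L ≃ₗ[K] L :=
    { LinearMap.mulLeft K v with
      invFun := fun x => v⁻¹ * x
      left_inv := fun x => inv_mul_cancel_left₀ hv0 x
      right_inv := fun x => mul_inv_cancel_left₀ hv0 x }
  have hcomp : skewEvalL θ P ∘ₗ (e : L →ₗ[K] L)
      = skewEvalL θ Q ∘ₗ ((θ.toLinearMap : L →ₗ[K] L) - LinearMap.id) := by
    ext x
    simp only [LinearMap.comp_apply, LinearMap.sub_apply, LinearMap.id_apply,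
      AlgEquiv.toLinearMap_apply, skewEvalL_apply]
    have : (e : L →ₗ[K] L) x = v * x := rfl
    rw [this]
    exact (hkey x).symm
  have hrk : Module.finrank K (LinearMap.ker (skewEvalL θ P ∘ₗ (e : L →ₗ[K] L)))
      = Module.finrank K (LinearMap.ker (skewEvalL θ P)) := by
    rw [LinearMap.ker_comp, Submodule.comap_equiv_eq_map_symm, LinearEquiv.finrank_map_eq]
  have hker_g : Module.finrank K
      (LinearMap.ker ((θ.toLinearMap : L →ₗ[K] L) - LinearMap.id)) ≤ 1 := by
    have hle : LinearMap.ker ((θ.toLinearMap : L →ₗ[K] L) - LinearMap.id)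
        ≤ Submodule.span K {(1:L)} := by
      intro x hx
      have hx' : θ x = x := by
        have h := LinearMap.mem_ker.mp hx
        rw [LinearMap.sub_apply, LinearMap.id_apply, sub_eq_zero] at h
        simpa using h
      obtain ⟨k, hk⟩ := hfix x hx'
      rw [← hk, Algebra.algebraMap_eq_smul_one]
      exact Submodule.smul_mem _ _ (Submodule.mem_span_singleton_self 1)
    calc Module.finrank K (LinearMap.ker ((θ.toLinearMap : L →ₗ[K] L) - LinearMap.id))
        ≤ Module.finrank K (Submodule.span K {(1:L)}) := Submodule.finrank_mono hle
      _ = 1 := finrank_span_singleton one_ne_zero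
  have hQdim : Module.finrank K (LinearMap.ker (skewEvalL θ Q)) ≤ m - 1 :=
    le_trans (IH Q.natDegree (by omega) Q hQ0 rfl) hQdeg
  calc Module.finrank K (LinearMap.ker (skewEvalL θ P))
      = Module.finrank K (LinearMap.ker (skewEvalL θ P ∘ₗ (e : L →ₗ[K] L))) := hrk.symm
    _ = Module.finrank K (LinearMap.ker (skewEvalL θ Q ∘ₗ
          ((θ.toLinearMap : L →ₗ[K] L) - LinearMap.id))) := by rw [hcomp]
    _ ≤ Module.finrank K (LinearMap.ker (skewEvalL θ Q)) + Module.finrank K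
          (LinearMap.ker ((θ.toLinearMap : L →ₗ[K] L) - LinearMap.id)) :=
        finrank_ker_comp_le _ _
    _ ≤ (m - 1) + 1 := add_le_add hQdim hker_g
    _ = m := by omega

lemma exists_monic_annihilator [FiniteDimensional K L]
    (hfix : ∀ x : L, θ x = x → ∃ k : K, algebraMap K L k = x) :
    ∀ l : List L, ∃ P : Polynomial L, P.Monic ∧
      (Submodule.span K {x | x ∈ l} ≤ LinearMap.ker (skewEvalL θ P)) ∧
      P.natDegree = Module.finrank K (Submodule.span K {x | x ∈ l}) := by
  intro l
  induction l with
  | nil =>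
      have hempty : {x : L | x ∈ ([] : List L)} = (∅ : Set L) := by simp
      refine ⟨1, Polynomial.monic_one, ?_, ?_⟩
      · rw [hempty, Submodule.span_empty]
        exact bot_le
      · rw [hempty, Submodule.span_empty, finrank_bot, Polynomial.natDegree_one]
  | cons a l IHl =>
      obtain ⟨P, hmonic, hker, hdeg⟩ := IHl
      have hset : {x : L | x ∈ a :: l} = insert a {x : L | x ∈ l} := by
        ext x; simp [List.mem_cons]
      by_cases ha : a ∈ Submodule.span K {x : L | x ∈ l}
      · refine ⟨P, hmonic, ?_, ?_⟩ <;> rw [hset, Submodule.span_insert_eq_span ha]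
        · exact hker
        · exact hdeg
      · have hP0 : P ≠ 0 := hmonic.ne_zero
        have hfr : Module.finrank K (Submodule.span K (insert a {x : L | x ∈ l}))
            = Module.finrank K (Submodule.span K {x : L | x ∈ l}) + 1 := by
          rw [Submodule.span_insert]
          have hinf : Submodule.span K {a} ⊓ Submodule.span K {x : L | x ∈ l} = ⊥ := by
            rw [eq_bot_iff]
            rintro x ⟨hx1, hx2⟩
            obtain ⟨k, rfl⟩ := Submodule.mem_span_singleton.mp hx1
            rcases eq_or_ne k 0 with rfl | hk
            · simp
            · exfalso
              apply ha
              have : a = k⁻¹ • (k • a) := by rw [smul_smul, inv_mul_cancel₀ hk, one_smul]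
              rw [this]
              exact Submodule.smul_mem _ _ hx2
          have := Submodule.finrank_sup_add_finrank_inf_eq
            (Submodule.span K {a}) (Submodule.span K {x : L | x ∈ l})
          rw [hinf, finrank_bot, add_zero, finrank_span_singleton
            (show a ≠ 0 from fun h => ha (h ▸ Submodule.zero_mem _))] at this
          omega
        have hg : skewEval θ P a ≠ 0 := by
          intro h0
          have hsub : Submodule.span K (insert a {x : L | x ∈ l})
              ≤ LinearMap.ker (skewEvalL θ P) := by
            rw [Submodule.span_le, Set.insert_subset_iff]
            exact ⟨LinearMap.mem_ker.mpr h0, fun x hx => hker (Submodule.subset_span hx)⟩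
          have h1 : Module.finrank K (Submodule.span K (insert a {x : L | x ∈ l}))
              ≤ P.natDegree :=
            le_trans (Submodule.finrank_mono hsub)
              (finrank_ker_skewEvalL_le θ hfix P.natDegree P hP0 rfl)
          omega
        set g := skewEval θ P a with hgdef
        set lam := θ g / g with hlam
        set P' : Polynomial L := Polynomial.X * P.map (θ.toAlgHom.toRingHom)
          - Polynomial.C lam * P with hP'
        have hXmap_deg : (Polynomial.X * P.map θ.toAlgHom.toRingHom).natDegree
            ≤ P.natDegree + 1 := by
          apply le_trans Polynomial.natDegree_mul_le
          rw [Polynomial.natDegree_X]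
          have := Polynomial.natDegree_map_le (f := θ.toAlgHom.toRingHom) (p := P)
          omega
        have hcoeff_top : P'.coeff (P.natDegree + 1) = 1 := by
          rw [hP', Polynomial.coeff_sub, Polynomial.coeff_X_mul, Polynomial.coeff_map,
            Polynomial.coeff_C_mul,
            Polynomial.coeff_eq_zero_of_natDegree_lt (Nat.lt_succ_self _), mul_zero, sub_zero,
            hmonic.coeff_natDegree, map_one]
        have hdeg_le : P'.natDegree ≤ P.natDegree + 1 :=
          le_trans (Polynomial.natDegree_sub_le _ _)
            (max_le hXmap_deg (le_trans (Polynomial.natDegree_C_mul_le _ _) (by omega)))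
        have hmonic' : P'.Monic :=
          Polynomial.monic_of_natDegree_le_of_coeff_eq_one _ hdeg_le hcoeff_top
        have hdeg' : P'.natDegree = P.natDegree + 1 :=
          le_antisymm hdeg_le (Polynomial.le_natDegree_of_ne_zero
            (by rw [hcoeff_top]; exact one_ne_zero))
        have heval : ∀ x : L, skewEval θ P' x
            = θ (skewEval θ P x) - lam * skewEval θ P x := by
          intro x
          rw [hP', ← skewEvalHom_apply, map_sub, skewEvalHom_apply, skewEvalHom_apply,
            skewEval_C_mul_s8]
          congr 1
          rw [skewEval_over_range θ _ x (N := P.natDegree + 2) (by omega),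
            skewEval_over_range θ P x (N := P.natDegree + 1) (Nat.lt_succ_self _), map_sum,
            Finset.sum_range_succ']
          have h0 : (Polynomial.X * P.map θ.toAlgHom.toRingHom).coeff 0 * (θ ^ 0) x = 0 := by
            rw [Polynomial.mul_coeff_zero, Polynomial.coeff_X_zero, zero_mul, zero_mul]
          rw [h0, add_zero]
          refine Finset.sum_congr rfl fun i _ => ?_
          rw [Polynomial.coeff_X_mul, Polynomial.coeff_map, map_mul, ← AlgEquiv.mul_apply,
            ← pow_succ']
          rfl
        refine ⟨P', hmonic', ?_, ?_⟩
        · rw [hset, Submodule.span_le]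
          rintro x hx
          rcases Set.mem_insert_iff.mp hx with rfl | hxl
          · refine SetLike.mem_coe.mpr (LinearMap.mem_ker.mpr ?_)
            rw [skewEvalL_apply, heval x, ← hgdef, hlam, div_mul_cancel₀ _ hg, sub_self]
          · refine SetLike.mem_coe.mpr (LinearMap.mem_ker.mpr ?_)
            have hx0 : skewEval θ P x = 0 :=
              LinearMap.mem_ker.mp (hker (Submodule.subset_span hxl))
            rw [skewEvalL_apply, heval x, hx0, map_zero, mul_zero, sub_zero]
        · rw [hset, hfr, hdeg', hdeg]

end Helpers

/-- `I_c = {P ∈ L[Z;θ] : P(cᵢ) = 0 for all i}` is a left ideal of `L[Z;θ]`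
(closed under addition and left skew multiplication), and the monic element of
minimal θ-degree in `I_c` has θ-degree equal to the rank weight of `c`,
i.e. `dim_K span_K {c₁,…,c_n}`. -/
theorem ideal_of_annihilators_and_min_generator
    {K L : Type*} [Field K] [Field L] [Algebra K L] [IsGalois K L]
    (n : ℕ) (hn : Module.finrank K L = n)
    (θ : L ≃ₐ[K] L) (hord : orderOf θ = n)
    (hgen : ∀ σ : L ≃ₐ[K] L, σ ∈ Subgroup.zpowers θ)
    (c : Fin n → L) :
    (∀ P Q : Polynomial L, (∀ i, skewEval θ P (c i) = 0) →
        (∀ i, skewEval θ Q (c i) = 0) → ∀ i, skewEval θ (P + Q) (c i) = 0) ∧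
    (∀ R P : Polynomial L, (∀ i, skewEval θ P (c i) = 0) →
        ∀ i, skewEval θ (skewMul θ R P) (c i) = 0) ∧
    (∃ P : Polynomial L, P.Monic ∧ (∀ i, skewEval θ P (c i) = 0) ∧
        P.natDegree = Module.finrank K (Submodule.span K (Set.range c)) ∧
        ∀ Q : Polynomial L, Q ≠ 0 → (∀ i, skewEval θ Q (c i) = 0) →
          P.natDegree ≤ Q.natDegree) := by
  refine ⟨?_, ?_, ?_⟩
  · intro P Q hP hQ i
    rw [← skewEvalHom_apply, map_add, skewEvalHom_apply, skewEvalHom_apply, hP i, hQ i, add_zero]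
  · intro R P hP i
    rw [skewEval_skewMul, hP i, skewEval_zero_right]
  · rcases Nat.eq_zero_or_pos n with rfl | hpos
    · refine ⟨1, Polynomial.monic_one, fun i => i.elim0, ?_, fun Q _ _ => by
        rw [Polynomial.natDegree_one]; exact Nat.zero_le _⟩
      have hre : Set.range c = (∅ : Set L) := Set.range_eq_empty c
      rw [hre, Submodule.span_empty, finrank_bot, Polynomial.natDegree_one]
    · have hfd : FiniteDimensional K L := FiniteDimensional.of_finrank_pos (hn ▸ hpos)
      have hfix : ∀ x : L, θ x = x → ∃ k : K, algebraMap K L k = x := by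
        intro x hx
        have hall : ∀ σ : L ≃ₐ[K] L, σ x = x := by
          intro σ
          have hθ : θ ∈ MulAction.stabilizer (L ≃ₐ[K] L) x := hx
          have hle : Subgroup.zpowers θ ≤ MulAction.stabilizer (L ≃ₐ[K] L) x :=
            Subgroup.zpowers_le.mpr hθ
          exact hle (hgen σ)
        have hmem : x ∈ IntermediateField.fixedField (⊤ : Subgroup (L ≃ₐ[K] L)) :=
          fun σ => hall σ
        have hbot : IntermediateField.fixedField (⊤ : Subgroup (L ≃ₐ[K] L)) = ⊥ := by
          rw [← IntermediateField.fixingSubgroup_bot (F := K) (E := L), IsGalois.fixedField_fixingSubgroup ⊥]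
        rw [hbot, IntermediateField.mem_bot] at hmem
        exact hmem
      obtain ⟨P, hmonic, hker, hdeg⟩ := exists_monic_annihilator θ hfix (List.ofFn c)
      have hsets : {x : L | x ∈ List.ofFn c} = Set.range c := by
        ext x; simp [List.mem_ofFn]
      rw [hsets] at hker hdeg
      refine ⟨P, hmonic, ?_, hdeg, ?_⟩
      · intro i
        exact LinearMap.mem_ker.mp (hker (Submodule.subset_span ⟨i, rfl⟩))
      · intro Q hQ0 hQann
        have hsub : Submodule.span K (Set.range c) ≤ LinearMap.ker (skewEvalL θ Q) := by
          rw [Submodule.span_le]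
          rintro _ ⟨i, rfl⟩
          exact LinearMap.mem_ker.mpr (hQann i)
        calc P.natDegree = Module.finrank K (Submodule.span K (Set.range c)) := hdeg
          _ ≤ Module.finrank K (LinearMap.ker (skewEvalL θ Q)) := Submodule.finrank_mono hsub
          _ ≤ Q.natDegree := finrank_ker_skewEvalL_le θ hfix Q.natDegree Q hQ0 rfl
end

section
/- The generalized Gabidulin code Gab_{θ,k}(g) is Maximum Rank Distance: every nonzero codeword has rank weight at least n − k + 1, and hence its minimum rank distance equals n − k + 1. -/
open Polynomial Finset

/-- The rank weight of `c ∈ Lⁿ`. -/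
noncomputable def rkw (K : Type*) {L : Type*} [Field K] [Field L] [Algebra K L]
    {n : ℕ} (c : Fin n → L) : ℕ :=
  Module.finrank K (Submodule.span K (Set.range c))

section Helpers

variable {K L : Type*} [Field K] [Field L] [Algebra K L]

variable (θ : L ≃ₐ[K] L)

lemma skewEval_eq (P : Polynomial L) (x : L) {D : ℕ} (hD : P.natDegree < D) :
    skewEval θ P x = ∑ i ∈ range D, P.coeff i * (θ ^ i) x := by
  unfold skewEval
  exact P.sum_over_range' (fun n => by simp) D hD

/-- θ-polynomial with coefficients `f 0, ..., f (D-1)`. -/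
noncomputable def mkPoly (f : ℕ → L) (D : ℕ) : Polynomial L :=
  ∑ i ∈ range D, C (f i) * X ^ i

lemma coeff_mkPoly (f : ℕ → L) (D m : ℕ) :
    (mkPoly f D).coeff m = if m < D then f m else 0 := by
  unfold mkPoly
  rw [finset_sum_coeff]
  simp only [coeff_C_mul, coeff_X_pow, mul_ite, mul_one, mul_zero]
  simp only [eq_comm (a := m)]
  rw [Finset.sum_ite_eq' (range D) m f]
  simp [Finset.mem_range]

lemma natDegree_mkPoly_lt (f : ℕ → L) (D : ℕ) (hD : 0 < D) :
    (mkPoly f D).natDegree < D := by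
  rcases Nat.exists_eq_succ_of_ne_zero hD.ne' with ⟨d, rfl⟩
  have : (mkPoly f d.succ).natDegree ≤ d := by
    rw [natDegree_le_iff_coeff_eq_zero]
    intro m hm
    rw [coeff_mkPoly]
    rw [if_neg]
    omega
  exact Nat.lt_succ_of_le this

lemma skewEval_mkPoly (f : ℕ → L) (D : ℕ) (x : L) :
    skewEval θ (mkPoly f D) x = ∑ i ∈ range D, f i * (θ ^ i) x := by
  rcases Nat.eq_zero_or_pos D with rfl | hD
  · simp [mkPoly, skewEval]
  · rw [skewEval_eq θ _ x (natDegree_mkPoly_lt f D hD)]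
    refine Finset.sum_congr rfl fun i hi => ?_
    rw [coeff_mkPoly, if_pos (Finset.mem_range.mp hi)]

/-- `skewEval` as a `K`-linear map. -/
noncomputable def skewLinMap (P : Polynomial L) : L →ₗ[K] L where
  toFun := skewEval θ P
  map_add' x y := by
    rw [skewEval_eq θ P x (lt_add_one _), skewEval_eq θ P y (lt_add_one _),
      skewEval_eq θ P (x+y) (lt_add_one _), ← Finset.sum_add_distrib]
    refine Finset.sum_congr rfl fun i _ => by rw [map_add, mul_add]
  map_smul' a x := by
    simp only [RingHom.id_apply]
    show skewEval θ P (a • x) = a • skewEval θ P x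
    rw [skewEval_eq θ P x (lt_add_one _), skewEval_eq θ P (a • x) (lt_add_one _)]
    simp only [RingHom.id_apply, Finset.smul_sum]
    refine Finset.sum_congr rfl fun i _ => ?_
    rw [map_smul, mul_smul_comm]

@[simp] lemma skewLinMap_apply (P : Polynomial L) (x : L) :
    skewLinMap θ P x = skewEval θ P x := rfl

end Helpers

section Kernel

variable {K L : Type*} [Field K] [Field L] [Algebra K L] (θ : L ≃ₐ[K] L)

lemma telescope (b u : ℕ → L) (D : ℕ) :
    ∑ j ∈ range D, (-(∑ i ∈ range (j+1), b i)) * (u (j+1) - u j)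
      = ∑ i ∈ range D, b i * u i - (∑ i ∈ range D, b i) * u D := by
  induction D with
  | zero => simp
  | succ D ih =>
    rw [Finset.sum_range_succ, ih, Finset.sum_range_succ (fun i => b i * u i),
      Finset.sum_range_succ b]
    ring

lemma finrank_comap_le [FiniteDimensional K L] (f : L →ₗ[K] L) (W : Submodule K L) :
    Module.finrank K (W.comap f) ≤
      Module.finrank K W + Module.finrank K (LinearMap.ker f) := by
  classical
  set f' : (W.comap f) →ₗ[K] W := f.restrict (p := W.comap f) (q := W) (fun x hx => hx) with hf'
  have h1 := LinearMap.finrank_range_add_finrank_ker f'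
  have h2 : Module.finrank K (LinearMap.range f') ≤ Module.finrank K W :=
    (LinearMap.range f').finrank_le
  have h3 : Module.finrank K (LinearMap.ker f') ≤ Module.finrank K (LinearMap.ker f) := by
    have hmem : ∀ x : LinearMap.ker f', ((x : W.comap f) : L) ∈ LinearMap.ker f := by
      rintro ⟨⟨x, hxW⟩, hx⟩
      have : f' ⟨x, hxW⟩ = 0 := hx
      have := congrArg (Subtype.val) this
      simpa [hf', LinearMap.restrict_apply] using this
    let φ : LinearMap.ker f' →ₗ[K] LinearMap.ker f :=
      LinearMap.codRestrict _ ((W.comap f).subtype.comp (LinearMap.ker f').subtype) hmem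
    have hφ : Function.Injective φ := by
      intro a b hab
      have := congrArg (Subtype.val) hab
      simp only [φ, LinearMap.codRestrict_apply, LinearMap.comp_apply,
        Submodule.subtype_apply] at this
      exact Subtype.ext (Subtype.ext this)
    exact LinearMap.finrank_le_finrank_of_injective hφ
  omega

lemma finrank_fixed_le_one [IsGalois K L] [FiniteDimensional K L]
    (hgen : ∀ σ : L ≃ₐ[K] L, σ ∈ Subgroup.zpowers θ) :
    Module.finrank K (LinearMap.ker (θ.toLinearMap - LinearMap.id)) ≤ 1 := by
  have hbot : IntermediateField.fixedField (⊤ : Subgroup (L ≃ₐ[K] L)) = ⊥ :=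
    ((IsGalois.tfae (F := K) (E := L)).out 0 1).mp ‹IsGalois K L›
  have hone : Module.finrank K (Submodule.span K ({1} : Set L)) = 1 :=
    finrank_span_singleton one_ne_zero
  have hle : LinearMap.ker (θ.toLinearMap - LinearMap.id) ≤ Submodule.span K ({1} : Set L) := by
    intro x hx
    have hθx : θ x = x := by
      have h := LinearMap.mem_ker.mp hx
      simp only [LinearMap.sub_apply, LinearMap.id_apply, AlgEquiv.toLinearMap_apply] at h
      exact sub_eq_zero.mp h
    have hnat : ∀ m : ℕ, (θ ^ m) x = x := by
      intro m
      induction m with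
      | zero => simp
      | succ m ih => rw [pow_succ, AlgEquiv.mul_apply, hθx, ih]
    have hall : ∀ σ : L ≃ₐ[K] L, σ x = x := by
      intro σ
      obtain ⟨m, rfl⟩ := hgen σ
      match m with
      | Int.ofNat m => simpa [zpow_natCast] using hnat m
      | Int.negSucc m =>
        show (θ ^ (Int.negSucc m)) x = x
        rw [zpow_negSucc]
        have h := hnat (m+1)
        calc (θ ^ (m+1))⁻¹ x = (θ ^ (m+1))⁻¹ ((θ ^ (m+1)) x) := by rw [h]
        _ = x := by rw [← AlgEquiv.mul_apply, inv_mul_cancel, AlgEquiv.one_apply]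
    have hxbot : x ∈ (⊥ : IntermediateField K L) := by
      rw [← hbot]
      rintro ⟨σ, -⟩
      exact hall σ
    rw [IntermediateField.mem_bot] at hxbot
    obtain ⟨c, rfl⟩ := hxbot
    rw [Submodule.mem_span_singleton]
    exact ⟨c, (Algebra.algebraMap_eq_smul_one c).symm⟩
  calc Module.finrank K (LinearMap.ker (θ.toLinearMap - LinearMap.id))
      ≤ Module.finrank K (Submodule.span K ({1} : Set L)) := Submodule.finrank_mono hle
    _ = 1 := hone

end Kernel

section KerBound

variable {K L : Type*} [Field K] [Field L] [Algebra K L] (θ : L ≃ₐ[K] L)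

lemma finrank_ker_skew_le [FiniteDimensional K L] [IsGalois K L]
    (hgen : ∀ σ : L ≃ₐ[K] L, σ ∈ Subgroup.zpowers θ) :
    ∀ d : ℕ, ∀ P : Polynomial L, P ≠ 0 → P.natDegree ≤ d →
      Module.finrank K (LinearMap.ker (skewLinMap θ P)) ≤ d := by
  intro d
  induction d with
  | zero =>
    intro P hP hdeg
    have ha : P.coeff 0 ≠ 0 := by
      intro h
      apply hP
      rw [Polynomial.eq_C_of_natDegree_le_zero hdeg, h, map_zero]
    have hker : LinearMap.ker (skewLinMap θ P) = ⊥ := by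
      rw [LinearMap.ker_eq_bot']
      intro x hx
      have : skewEval θ P x = 0 := hx
      rw [skewEval_eq θ P x (Nat.lt_succ_of_le hdeg)] at this
      simp only [Finset.range_one, Finset.sum_singleton, pow_zero, AlgEquiv.one_apply] at this
      exact (mul_eq_zero.mp this).resolve_left ha
    rw [hker, finrank_bot]
  | succ d ih =>
    intro P hP hdeg
    by_cases hker : LinearMap.ker (skewLinMap θ P) = ⊥
    · rw [hker, finrank_bot]; omega
    obtain ⟨v, hvker, hv0⟩ := Submodule.ne_bot_iff _ |>.mp hker
    have hPv : skewEval θ P v = 0 := hvker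
    -- the polynomial T with coefficients b i
    set b : ℕ → L := fun i => P.coeff i * (θ ^ i) v with hb
    set T : Polynomial L := mkPoly b (d+2) with hT
    have hTdeg : T.natDegree < d + 2 := natDegree_mkPoly_lt b (d+2) (by omega)
    have hTP : ∀ x, skewEval θ T x = skewEval θ P (v * x) := by
      intro x
      rw [hT, skewEval_mkPoly, skewEval_eq θ P (v * x) (by omega : P.natDegree < d + 2)]
      refine Finset.sum_congr rfl fun i _ => ?_
      rw [hb]
      simp only [map_mul]
      ring
    have hT0 : T ≠ 0 := by
      intro h
      have hcoeff : T.coeff P.natDegree = b P.natDegree := by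
        rw [hT, coeff_mkPoly, if_pos (by omega : P.natDegree < d + 2)]
      rw [h, Polynomial.coeff_zero] at hcoeff
      have : P.leadingCoeff * (θ ^ P.natDegree) v = 0 := by
        rw [Polynomial.leadingCoeff]; exact hcoeff.symm
      rcases mul_eq_zero.mp this with h1 | h2
      · exact hP (Polynomial.leadingCoeff_eq_zero.mp h1)
      · exact hv0 ((θ ^ P.natDegree).injective (by simpa using h2))
    have hsum : ∑ i ∈ range (d+2), b i = 0 := by
      have h1 : skewEval θ T 1 = 0 := by rw [hTP 1, mul_one, hPv]
      rw [hT, skewEval_mkPoly] at h1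
      simpa using h1
    -- the quotient polynomial T'
    set c : ℕ → L := fun j => -∑ i ∈ range (j+1), b i with hc
    set T' : Polynomial L := mkPoly c (d+1) with hT'
    have hT'deg : T'.natDegree < d + 1 := natDegree_mkPoly_lt c (d+1) (by omega)
    have key : ∀ x, skewEval θ T x = skewEval θ T' (θ x - x) := by
      intro x
      rw [hT, hT', skewEval_mkPoly, skewEval_mkPoly]
      have hstep : ∀ j : ℕ, (θ ^ j) (θ x - x) = (θ ^ (j+1)) x - (θ ^ j) x := by
        intro j
        rw [map_sub, pow_succ, AlgEquiv.mul_apply]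
      calc ∑ i ∈ range (d+2), b i * (θ ^ i) x
          = ∑ i ∈ range (d+1), b i * (θ ^ i) x + b (d+1) * (θ ^ (d+1)) x :=
            Finset.sum_range_succ _ _
        _ = ∑ i ∈ range (d+1), b i * (θ ^ i) x
              - (∑ i ∈ range (d+1), b i) * (θ ^ (d+1)) x := by
            have : ∑ i ∈ range (d+1), b i = -b (d+1) := by
              have h := hsum
              rw [Finset.sum_range_succ] at h
              exact eq_neg_of_add_eq_zero_left h
            rw [this]; ring
        _ = ∑ j ∈ range (d+1), (-(∑ i ∈ range (j+1), b i)) * ((θ ^ (j+1)) x - (θ ^ j) x) :=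
            (telescope b (fun i => (θ ^ i) x) (d+1)).symm
        _ = ∑ j ∈ range (d+1), c j * (θ ^ j) (θ x - x) := by
            refine Finset.sum_congr rfl fun j _ => ?_
            rw [hstep j, hc]
    have hT'0 : T' ≠ 0 := by
      intro h
      apply hT0
      have hc0 : ∀ j, j < d + 1 → c j = 0 := by
        intro j hj
        have : T'.coeff j = c j := by rw [hT', coeff_mkPoly, if_pos hj]
        rw [h, Polynomial.coeff_zero] at this
        exact this.symm
      have hc' : ∀ j, j ≤ d + 1 → c j = 0 := by
        intro j hj
        rcases Nat.lt_or_ge j (d+1) with h' | h'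
        · exact hc0 j h'
        · have : j = d + 1 := by omega
          rw [this, hc]
          simp only [hsum, neg_zero]
      have hb0 : ∀ i, i < d + 2 → b i = 0 := by
        intro i hi
        match i with
        | 0 =>
          have h0 := hc' 0 (by omega)
          rw [hc] at h0
          simpa using h0
        | (m+1) =>
          have h1 : ∑ i ∈ range (m+1), b i = 0 := by
            have := hc' m (by omega)
            rw [hc] at this
            simpa using this
          have h2 : ∑ i ∈ range (m+2), b i = 0 := by
            have := hc' (m+1) (by omega)
            rw [hc] at this
            simpa using this
          rw [Finset.sum_range_succ, h1, zero_add] at h2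
          exact h2
      rw [hT]
      unfold mkPoly
      refine Finset.sum_eq_zero fun i hi => ?_
      rw [hb0 i (Finset.mem_range.mp hi), map_zero, zero_mul]
    -- kernel comparisons
    set Dlin : L →ₗ[K] L := θ.toLinearMap - LinearMap.id with hDlin
    have hkerD : Module.finrank K (LinearMap.ker Dlin) ≤ 1 := finrank_fixed_le_one θ hgen
    have hsub : LinearMap.ker (skewLinMap θ T) ≤
        (LinearMap.ker (skewLinMap θ T')).comap Dlin := by
      intro x hx
      have hx' : skewEval θ T x = 0 := hx
      rw [Submodule.mem_comap, LinearMap.mem_ker]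
      show skewEval θ T' (Dlin x) = 0
      have : Dlin x = θ x - x := by
        rw [hDlin]; simp [LinearMap.sub_apply]
      rw [this, ← key x, hx']
    have hkerT' : Module.finrank K (LinearMap.ker (skewLinMap θ T')) ≤ d :=
      ih T' hT'0 (by omega)
    have hkerT : Module.finrank K (LinearMap.ker (skewLinMap θ T)) ≤ d + 1 :=
      calc Module.finrank K (LinearMap.ker (skewLinMap θ T))
          ≤ Module.finrank K ((LinearMap.ker (skewLinMap θ T')).comap Dlin) :=
            Submodule.finrank_mono hsub
        _ ≤ Module.finrank K (LinearMap.ker (skewLinMap θ T')) +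
              Module.finrank K (LinearMap.ker Dlin) := finrank_comap_le Dlin _
        _ ≤ d + 1 := by omega
    -- transfer from T to P via multiplication by v
    have hmul : (LinearMap.mulLeft K v).comp (LinearMap.mulLeft K v⁻¹) = LinearMap.id := by
      ext x
      simp [LinearMap.mulLeft_apply, ← mul_assoc, mul_inv_cancel₀ hv0]
    have hmul' : (LinearMap.mulLeft K v⁻¹).comp (LinearMap.mulLeft K v) = LinearMap.id := by
      ext x
      simp [LinearMap.mulLeft_apply, ← mul_assoc, inv_mul_cancel₀ hv0]
    set e : L ≃ₗ[K] L := LinearEquiv.ofLinear (LinearMap.mulLeft K v)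
      (LinearMap.mulLeft K v⁻¹) hmul hmul' with he
    have hkercomap : LinearMap.ker (skewLinMap θ T) =
        (LinearMap.ker (skewLinMap θ P)).comap (e : L →ₗ[K] L) := by
      ext x
      simp only [LinearMap.mem_ker, Submodule.mem_comap]
      constructor
      · intro hx
        show skewEval θ P (e x) = 0
        have : (e : L →ₗ[K] L) x = v * x := rfl
        rw [show e x = v * x from rfl, ← hTP x]
        exact hx
      · intro hx
        show skewEval θ T x = 0
        rw [hTP x]
        exact hx
    have : Module.finrank K (LinearMap.ker (skewLinMap θ P)) =
        Module.finrank K (LinearMap.ker (skewLinMap θ T)) := by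
      rw [hkercomap, Submodule.comap_equiv_eq_map_symm, LinearEquiv.finrank_map_eq]
    omega

end KerBound

section MainHelpers

variable {K L : Type*} [Field K] [Field L] [Algebra K L] (θ : L ≃ₐ[K] L)

lemma rkw_eq_finrank_range {n : ℕ} (hn : Module.finrank K L = n) (hn1 : 0 < n)
    (g : Fin n → L) (hg : LinearIndependent K g) (P : Polynomial L) (c : Fin n → L)
    (hc : ∀ i, c i = skewEval θ P (g i)) :
    rkw K c = Module.finrank K (LinearMap.range (skewLinMap θ P)) := by
  haveI : Nonempty (Fin n) := ⟨⟨0, hn1⟩⟩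
  have hspan : Submodule.span K (Set.range g) = ⊤ :=
    hg.span_eq_top_of_card_eq_finrank (by simp [hn])
  have hcc : c = (skewLinMap θ P) ∘ g := funext fun i => hc i
  unfold rkw
  rw [hcc, Set.range_comp, ← Submodule.map_span, hspan, Submodule.map_top]

lemma le_finrank_ker_of_vanish [FiniteDimensional K L] {n : ℕ}
    (g : Fin n → L) (hg : LinearIndependent K g) (P : Polynomial L) (j : ℕ) (hjn : j ≤ n)
    (hvan : ∀ i : Fin n, (i : ℕ) < j → skewEval θ P (g i) = 0) :
    j ≤ Module.finrank K (LinearMap.ker (skewLinMap θ P)) := by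
  set f := skewLinMap θ P with hf
  have hmem : ∀ i : Fin j, g (Fin.castLE hjn i) ∈ LinearMap.ker f := by
    intro i
    rw [LinearMap.mem_ker]
    exact hvan (Fin.castLE hjn i) i.isLt
  set w : Fin j → LinearMap.ker f := fun i => ⟨g (Fin.castLE hjn i), hmem i⟩ with hw
  have hwind : LinearIndependent K w := by
    apply LinearIndependent.of_comp (LinearMap.ker f).subtype
    have : (LinearMap.ker f).subtype ∘ w = g ∘ Fin.castLE hjn := rfl
    rw [this]
    exact hg.comp (Fin.castLE hjn) (Fin.castLE_injective hjn)
  simpa using hwind.fintype_card_le_finrank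

lemma skew_nonvanish [FiniteDimensional K L] [IsGalois K L]
    (hgen : ∀ σ : L ≃ₐ[K] L, σ ∈ Subgroup.zpowers θ) {n : ℕ}
    (g : Fin n → L) (hg : LinearIndependent K g) (P : Polynomial L) (hP : P ≠ 0)
    (j : ℕ) (hjn : j < n) (hdeg : P.natDegree ≤ j)
    (hvan : ∀ i : Fin n, (i : ℕ) < j → skewEval θ P (g i) = 0) :
    skewEval θ P (g ⟨j, hjn⟩) ≠ 0 := by
  intro h0
  have hvan' : ∀ i : Fin n, (i : ℕ) < j + 1 → skewEval θ P (g i) = 0 := by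
    intro i hi
    rcases Nat.lt_or_ge (i : ℕ) j with h' | h'
    · exact hvan i h'
    · have : i = ⟨j, hjn⟩ := Fin.ext (show (i:ℕ) = j by omega)
      rw [this]; exact h0
  have h1 := le_finrank_ker_of_vanish θ g hg P (j+1) (by omega) hvan'
  have h2 := finrank_ker_skew_le θ hgen j P hP hdeg
  omega

lemma exists_annihilator [FiniteDimensional K L] [IsGalois K L]
    (hgen : ∀ σ : L ≃ₐ[K] L, σ ∈ Subgroup.zpowers θ) {n : ℕ}
    (g : Fin n → L) (hg : LinearIndependent K g) :
    ∀ j : ℕ, j ≤ n → ∃ P : Polynomial L, P ≠ 0 ∧ P.natDegree ≤ j ∧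
      ∀ i : Fin n, (i : ℕ) < j → skewEval θ P (g i) = 0 := by
  intro j
  induction j with
  | zero =>
    intro _
    exact ⟨Polynomial.C 1, by simp, by simp, fun i hi => by omega⟩
  | succ j ih =>
    intro hjn
    obtain ⟨P, hP0, hPdeg, hvan⟩ := ih (by omega)
    have hjn' : j < n := hjn
    set w := skewEval θ P (g ⟨j, hjn'⟩) with hwdef
    have hw : w ≠ 0 := skew_nonvanish θ hgen g hg P hP0 j hjn' hPdeg hvan
    set d := P.natDegree with hd
    set q := θ w / w with hq
    set Q : Polynomial L := mkPoly
      (fun i => (if i = 0 then 0 else θ (P.coeff (i-1))) - q * P.coeff i) (d + 2) with hQ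
    have hQeval : ∀ x, skewEval θ Q x = θ (skewEval θ P x) - q * skewEval θ P x := by
      intro x
      rw [hQ, skewEval_mkPoly]
      have hsplit : ∀ i : ℕ,
          ((if i = 0 then 0 else θ (P.coeff (i-1))) - q * P.coeff i) * (θ ^ i) x
          = (if i = 0 then 0 else θ (P.coeff (i-1))) * (θ ^ i) x
            - q * (P.coeff i * (θ ^ i) x) := by
        intro i; ring
      have hsd : ∑ i ∈ range (d+2),
          ((if i = 0 then 0 else θ (P.coeff (i-1))) - q * P.coeff i) * (θ ^ i) x
          = (∑ i ∈ range (d+2), (if i = 0 then 0 else θ (P.coeff (i-1))) * (θ ^ i) x)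
            - ∑ i ∈ range (d+2), q * (P.coeff i * (θ ^ i) x) := by
        rw [← Finset.sum_sub_distrib]
        exact Finset.sum_congr rfl fun i _ => hsplit i
      rw [hsd, ← Finset.mul_sum]
      have h2 : ∑ i ∈ range (d+2), P.coeff i * (θ ^ i) x = skewEval θ P x := by
        rw [skewEval_eq θ P x (by omega : P.natDegree < d + 2)]
      have h1 : ∑ i ∈ range (d+2), (if i = 0 then 0 else θ (P.coeff (i-1))) * (θ ^ i) x
          = θ (skewEval θ P x) := by
        rw [Finset.sum_range_succ']
        have hF0 : (if (0:ℕ) = 0 then (0:L) else θ (P.coeff (0-1))) * (θ ^ 0) x = 0 := by simp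
        rw [hF0, add_zero, skewEval_eq θ P x (by omega : P.natDegree < d + 1),
          map_sum θ (fun i => P.coeff i * (θ ^ i) x) (range (d+1))]
        refine Finset.sum_congr rfl fun i _ => ?_
        rw [if_neg (Nat.succ_ne_zero i), Nat.add_sub_cancel, map_mul, pow_succ',
          AlgEquiv.mul_apply]
      rw [h1, h2]
    have hQcoeff : Q.coeff (d+1) = θ (P.leadingCoeff) := by
      rw [hQ, coeff_mkPoly, if_pos (by omega : d + 1 < d + 2)]
      have : P.coeff (d+1) = 0 := Polynomial.coeff_eq_zero_of_natDegree_lt (by omega)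
      rw [this, if_neg (Nat.succ_ne_zero d), mul_zero, sub_zero, Nat.add_sub_cancel]
      rfl
    have hQ0 : Q ≠ 0 := by
      intro h
      rw [h, Polynomial.coeff_zero] at hQcoeff
      have : P.leadingCoeff = 0 := θ.injective (by simpa using hQcoeff.symm)
      exact hP0 (Polynomial.leadingCoeff_eq_zero.mp this)
    have hQdeg : Q.natDegree ≤ j + 1 := by
      have := natDegree_mkPoly_lt
        (fun i => (if i = 0 then 0 else θ (P.coeff (i-1))) - q * P.coeff i) (d + 2) (by omega)
      rw [← hQ] at this
      omega
    refine ⟨Q, hQ0, hQdeg, ?_⟩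
    intro i hi
    rw [hQeval]
    rcases Nat.lt_or_ge (i : ℕ) j with h' | h'
    · rw [hvan i h', map_zero, mul_zero, sub_zero]
    · have : i = ⟨j, hjn'⟩ := Fin.ext (show (i:ℕ) = j by omega)
      rw [this, ← hwdef, hq, div_mul_cancel₀ _ hw, sub_self]

end MainHelpers

/-- The generalized Gabidulin code `Gab_{θ,k}(g)` is Maximum Rank Distance:
every nonzero codeword has rank weight at least `n - k + 1`, and its minimum
rank distance equals `n - k + 1`. -/
theorem gabidulin_code_is_MRD
    {K L : Type*} [Field K] [Field L] [Algebra K L] [IsGalois K L]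
    (n : ℕ) (hn : Module.finrank K L = n)
    (θ : L ≃ₐ[K] L) (hord : orderOf θ = n)
    (hgen : ∀ σ : L ≃ₐ[K] L, σ ∈ Subgroup.zpowers θ)
    (g : Fin n → L) (hg : LinearIndependent K g)
    (k : ℕ) (hk1 : 1 ≤ k) (hkn : k ≤ n) :
    (∀ c : Fin n → L,
      (∃ P : Polynomial L, P.natDegree < k ∧ ∀ i, c i = skewEval θ P (g i)) →
      c ≠ 0 → n - k + 1 ≤ rkw K c) ∧
    (∃ c : Fin n → L,
      (∃ P : Polynomial L, P.natDegree < k ∧ ∀ i, c i = skewEval θ P (g i)) ∧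
      c ≠ 0 ∧ rkw K c = n - k + 1) := by
  have hn1 : 0 < n := by omega
  haveI : FiniteDimensional K L := FiniteDimensional.of_finrank_pos (by omega)
  constructor
  · rintro c ⟨P, hPdeg, hc⟩ hc0
    have hP0 : P ≠ 0 := by
      rintro rfl
      apply hc0
      funext i
      rw [hc i]
      simp [skewEval]
    have hker := finrank_ker_skew_le θ hgen (k-1) P hP0 (by omega)
    have hrn := LinearMap.finrank_range_add_finrank_ker (skewLinMap θ P)
    rw [hn] at hrn
    have hrkw := rkw_eq_finrank_range θ hn hn1 g hg P c hc
    omega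
  · obtain ⟨P, hP0, hPdeg, hvan⟩ := exists_annihilator θ hgen g hg (k-1) (by omega)
    have hk1n : k - 1 < n := by omega
    refine ⟨fun i => skewEval θ P (g i), ⟨P, by omega, fun i => rfl⟩, ?_, ?_⟩
    · have hnv : skewEval θ P (g ⟨k-1, hk1n⟩) ≠ 0 :=
        skew_nonvanish θ hgen g hg P hP0 (k-1) hk1n hPdeg hvan
      intro h
      exact hnv (congrFun h ⟨k-1, hk1n⟩)
    · have hrkw := rkw_eq_finrank_range θ hn hn1 g hg P _ (fun i => rfl)
      have hker := finrank_ker_skew_le θ hgen (k-1) P hP0 hPdeg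
      have hker' := le_finrank_ker_of_vanish θ g hg P (k-1) (by omega) hvan
      have hrn := LinearMap.finrank_range_add_finrank_ker (skewLinMap θ P)
      rw [hn] at hrn
      omega
end

section
/- In the Artin–Schreier extension L = F₅(x)[y] with y⁵ − y = x and θ(y) = y + 1, the 3×5 matrix G with rows (θ^{i}(y^j))_{j=0..4} for i = 0,1,2, i.e. rows (1, y, y², y³, y⁴), (1, y+1, (y+1)², (y+1)³, (y+1)⁴), (1, y+2, (y+2)², (y+2)³, (y+2)⁴), generates an L-linear code of dimension 3 in L⁵ whose minimum rank distance (with respect to K = F₅(x)) is exactly 3. -/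
instance : Fact (Nat.Prime 5) := ⟨by norm_num⟩

set_option maxHeartbeats 2000000 in
set_option synthInstance.maxHeartbeats 400000 in
/-- In the Artin–Schreier extension `L = F₅(x)[y]`, `y⁵ - y = x`, with
`θ(y) = y + 1`, the 3×5 matrix with rows `(θⁱ(yʲ))_{j=0..4}`, `i = 0,1,2`
(i.e. `(1,y,y²,y³,y⁴)`, `(1,y+1,(y+1)²,(y+1)³,(y+1)⁴)`,
`(1,y+2,(y+2)²,(y+2)³,(y+2)⁴)`) generates an `L`-linear code of dimension 3 in
`L⁵` whose minimum rank distance over `K = F₅(x)` is exactly 3. -/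
theorem artin_schreier_gabidulin_example
    (L : Type*) [Field L] [Algebra (RatFunc (ZMod 5)) L]
    (y : L) (hy : y ^ 5 - y = algebraMap (RatFunc (ZMod 5)) L RatFunc.X)
    (hLgen : Algebra.adjoin (RatFunc (ZMod 5)) {y} = ⊤)
    (θ : L ≃ₐ[RatFunc (ZMod 5)] L) (hθ : θ y = y + 1)
    (hgen : ∀ σ : L ≃ₐ[RatFunc (ZMod 5)] L, σ ∈ Subgroup.zpowers θ)
    (C : Submodule L (Fin 5 → L))
    (hC : C = Submodule.span L
      (Set.range fun i : Fin 3 => fun j : Fin 5 => (θ ^ (i : ℕ)) (y ^ (j : ℕ)))) :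
    Module.finrank L C = 3 ∧
    (∀ c ∈ C, c ≠ 0 → 3 ≤ rkw (RatFunc (ZMod 5)) c) ∧
    (∃ c ∈ C, c ≠ 0 ∧ rkw (RatFunc (ZMod 5)) c = 3) := by
  set K := RatFunc (ZMod 5) with hK
  set A := algebraMap K L with hA
  have hAinj : Function.Injective A := (algebraMap K L).injective
  have h5K : (5 : K) = 0 := by
    rw [show (5:K) = RatFunc.C (5 : ZMod 5) from (map_ofNat _ 5).symm,
      show (5 : ZMod 5) = 0 by decide, map_zero]
  have h5L : (5 : L) = 0 := by
    rw [show (5:L) = A (5:K) from (map_ofNat A 5).symm, h5K, map_zero]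
  have h2K : (2 : K) ≠ 0 := fun h => one_ne_zero (α := K) (by linear_combination 3*h - h5K)
  have h2L : (2 : L) ≠ 0 := fun h => one_ne_zero (α := L) (by linear_combination 3*h - h5L)
  have h4K : (4 : K) ≠ 0 := fun h => one_ne_zero (α := K) (by linear_combination 4*h - 3*h5K)
  have h6K : (6 : K) ≠ 0 := fun h => one_ne_zero (α := K) (by linear_combination h - h5K)
  have h24K : (24 : K) ≠ 0 := fun h => one_ne_zero (α := K) (by linear_combination 4*h - 19*h5K)
  have hθ1 : θ (y + 1) = y + 2 := by rw [map_add, hθ, map_one]; ring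
  have hθ2 : θ (y + 2) = y + 3 := by rw [map_add, hθ, map_ofNat]; ring
  have hθ3 : θ (y + 3) = y + 4 := by rw [map_add, hθ, map_ofNat]; ring
  have step : ∀ c0 c1 c2 c3 c4 : K, ∀ t : L,
      A c0 + A c1 * t + A c2 * t^2 + A c3 * t^3 + A c4 * t^4 = 0 →
      A c0 + A c1 * (θ t) + A c2 * (θ t)^2 + A c3 * (θ t)^3 + A c4 * (θ t)^4 = 0 := by
    intro c0 c1 c2 c3 c4 t ht
    have h2 := congrArg θ ht
    simp only [map_add, map_mul, map_pow, AlgEquiv.commutes, map_zero, hA] at h2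
    have hc : ∀ r : K, θ (algebraMap K L r) = algebraMap K L r := fun r => AlgEquiv.commutes θ r
    simp only [hc] at h2
    exact h2
  set b : Fin 5 → L := fun j => y ^ (j:ℕ) with hb
  have hbind : LinearIndependent K b := by
    rw [Fintype.linearIndependent_iff]
    intro a h
    have e0 : A (a 0) + A (a 1) * y + A (a 2) * y^2 + A (a 3) * y^3 + A (a 4) * y^4 = 0 := by
      simp only [hb, Fin.sum_univ_five, Algebra.smul_def, Fin.val_zero, Fin.val_one, pow_zero,
        pow_one, show ((2:Fin 5):ℕ) = 2 from rfl, show ((3:Fin 5):ℕ) = 3 from rfl,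
        show ((4:Fin 5):ℕ) = 4 from rfl] at h
      linear_combination h
    have e1 := step _ _ _ _ _ _ e0
    rw [hθ] at e1
    have e2 := step _ _ _ _ _ _ e1
    rw [hθ1] at e2
    have e3 := step _ _ _ _ _ _ e2
    rw [hθ2] at e3
    have e4 := step _ _ _ _ _ _ e3
    rw [hθ3] at e4
    have ha4 : a 4 = 0 := by
      have h24 : (24:K) * a 4 = 0 := by
        apply hAinj; rw [map_mul, map_ofNat, map_zero]
        linear_combination e4 - 4*e3 + 6*e2 - 4*e1 + e0
      exact (mul_eq_zero.mp h24).resolve_left h24K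
    have hA4 : A (a 4) = 0 := by rw [ha4, map_zero]
    have ha3 : a 3 = 0 := by
      have h6 : (6:K) * a 3 = 0 := by
        apply hAinj; rw [map_mul, map_ofNat, map_zero]
        linear_combination e3 - 3*e2 + 3*e1 - e0 - (24*y+36)*hA4
      exact (mul_eq_zero.mp h6).resolve_left h6K
    have hA3 : A (a 3) = 0 := by rw [ha3, map_zero]
    have ha2 : a 2 = 0 := by
      have h2 : (2:K) * a 2 = 0 := by
        apply hAinj; rw [map_mul, map_ofNat, map_zero]
        linear_combination e2 - 2*e1 + e0 - (6*y+6)*hA3 - (12*y^2+24*y+14)*hA4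
      exact (mul_eq_zero.mp h2).resolve_left h2K
    have hA2 : A (a 2) = 0 := by rw [ha2, map_zero]
    have ha1 : a 1 = 0 := by
      apply hAinj; rw [map_zero]
      linear_combination e1 - e0 - (2*y+1)*hA2 - (3*y^2+3*y+1)*hA3 - (4*y^3+6*y^2+4*y+1)*hA4
    have hA1 : A (a 1) = 0 := by rw [ha1, map_zero]
    have ha0 : a 0 = 0 := by
      apply hAinj; rw [map_zero]
      linear_combination e0 - y*hA1 - y^2*hA2 - y^3*hA3 - y^4*hA4
    intro i; fin_cases i <;> assumption
  have h3K : (3 : K) ≠ 0 := fun h => one_ne_zero (α := K) (by linear_combination 2*h - h5K)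
  have hbj : ∀ n : Fin 5, y^(n:ℕ) ∈ Submodule.span K (Set.range b) :=
    fun n => Submodule.subset_span ⟨n, rfl⟩
  have h1S : (1:L) ∈ Submodule.span K (Set.range b) := by simpa using hbj 0
  have hyS : y ∈ Submodule.span K (Set.range b) := by simpa using hbj 1
  have hbn : ∀ n : ℕ, (hn : n < 5) → y ^ n ∈ Submodule.span K (Set.range b) :=
    fun n hn => hbj ⟨n, hn⟩
  have h5S : y^5 ∈ Submodule.span K (Set.range b) := by
    rw [show y^5 = (y^5 - y) + y by ring, hy]
    refine add_mem ?_ hyS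
    rw [Algebra.algebraMap_eq_smul_one]
    exact Submodule.smul_mem _ _ h1S
  have hmul_y : ∀ z ∈ Submodule.span K (Set.range b), y * z ∈ Submodule.span K (Set.range b) := by
    intro z hz
    induction hz using Submodule.span_induction with
    | mem w hw =>
      obtain ⟨j, rfl⟩ := hw
      obtain ⟨n, hn⟩ := j
      simp only [hb]
      interval_cases n
      · rw [show y * y^0 = y^1 by ring]; exact hbn 1 (by norm_num)
      · rw [show y * y^1 = y^2 by ring]; exact hbn 2 (by norm_num)
      · rw [show y * y^2 = y^3 by ring]; exact hbn 3 (by norm_num)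
      · rw [show y * y^3 = y^4 by ring]; exact hbn 4 (by norm_num)
      · rw [show y * y^4 = y^5 by ring]; exact h5S
    | zero => simp
    | add u v hu hv hu' hv' => rw [mul_add]; exact add_mem hu' hv'
    | smul k u hu hu' => rw [mul_smul_comm]; exact Submodule.smul_mem _ _ hu'
  have hmulS : ∀ x z : L, x ∈ Submodule.span K (Set.range b) →
      z ∈ Submodule.span K (Set.range b) → x * z ∈ Submodule.span K (Set.range b) := by
    have hpow : ∀ n : ℕ, ∀ z ∈ Submodule.span K (Set.range b),
        y^n * z ∈ Submodule.span K (Set.range b) := by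
      intro n
      induction n with
      | zero => intro z hz; simpa using hz
      | succ m ih =>
        intro z hz
        rw [show y^(m+1) * z = y * (y^m * z) by ring]
        exact hmul_y _ (ih z hz)
    intro x z hx hz
    induction hx using Submodule.span_induction with
    | mem w hw => obtain ⟨j, rfl⟩ := hw; exact hpow _ _ hz
    | zero => simp
    | add u v hu hv hu' hv' => rw [add_mul]; exact add_mem hu' hv'
    | smul k u hu hu' => rw [smul_mul_assoc]; exact Submodule.smul_mem _ _ hu'
  have hspan : Submodule.span K (Set.range b) = ⊤ := by
    have hT : Algebra.adjoin K {y} ≤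
        (Submodule.span K (Set.range b)).toSubalgebra h1S hmulS := by
      apply Algebra.adjoin_le
      intro w hw
      rw [Set.mem_singleton_iff] at hw
      subst hw
      exact hyS
    rw [Submodule.eq_top_iff']
    intro z
    exact hT (hLgen.symm ▸ Algebra.mem_top)
  have hfd : FiniteDimensional K L := Module.Finite.of_basis (Module.Basis.mk hbind (by rw [hspan]))
  have hfin : Module.finrank K L = 5 := by
    rw [Module.finrank_eq_card_basis (Module.Basis.mk hbind (by rw [hspan]))]
    simp
  have hfix : ∀ z : L, θ z = z → ∃ k : K, A k = z := by
    intro z hz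
    obtain ⟨a, ha⟩ := (Submodule.mem_span_range_iff_exists_fun K).mp
      (hspan ▸ (Submodule.mem_top : z ∈ (⊤ : Submodule K L)))
    have hz0 : A (a 0) + A (a 1) * y + A (a 2) * y^2 + A (a 3) * y^3 + A (a 4) * y^4 = z := by
      simp only [hb, Fin.sum_univ_five, Algebra.smul_def, Fin.val_zero, Fin.val_one, pow_zero,
        pow_one, show ((2:Fin 5):ℕ) = 2 from rfl, show ((3:Fin 5):ℕ) = 3 from rfl,
        show ((4:Fin 5):ℕ) = 4 from rfl] at ha
      linear_combination ha
    have hz1 : A (a 0) + A (a 1) * (y+1) + A (a 2) * (y+1)^2 + A (a 3) * (y+1)^3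
        + A (a 4) * (y+1)^4 = z := by
      have h2 := congrArg θ hz0
      simp only [map_add, map_mul, map_pow, AlgEquiv.commutes, hθ, hA, show ∀ r : K, θ (algebraMap K L r) = algebraMap K L r from fun r => AlgEquiv.commutes θ r] at h2
      rw [hz] at h2
      exact h2
    have hd := Fintype.linearIndependent_iff.mp hbind
      ![a 1 + a 2 + a 3 + a 4, 2*(a 2) + 3*(a 3) + 4*(a 4), 3*(a 3) + 6*(a 4), 4*(a 4), 0]
      (by
        simp only [hb, Fin.sum_univ_five, Algebra.smul_def, Fin.val_zero, Fin.val_one, pow_zero,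
          pow_one, show ((2:Fin 5):ℕ) = 2 from rfl, show ((3:Fin 5):ℕ) = 3 from rfl,
          show ((4:Fin 5):ℕ) = 4 from rfl, Matrix.cons_val_zero, Matrix.cons_val_one,
          Matrix.head_cons, Matrix.cons_val_two, Matrix.cons_val_three, Matrix.cons_val_four, Matrix.tail_cons, map_add, map_mul, map_ofNat, map_zero]
        linear_combination hz1 - hz0)
    have q4 : (4:K) * a 4 = 0 := by simpa using hd 3
    have ha4 : a 4 = 0 := (mul_eq_zero.mp q4).resolve_left h4K
    have q3 : 3*(a 3) + 6*(a 4) = 0 := by simpa using hd 2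
    have ha3 : a 3 = 0 := by
      have : (3:K) * a 3 = 0 := by linear_combination q3 - 6*ha4
      exact (mul_eq_zero.mp this).resolve_left h3K
    have q2 : 2*(a 2) + 3*(a 3) + 4*(a 4) = 0 := by simpa using hd 1
    have ha2 : a 2 = 0 := by
      have : (2:K) * a 2 = 0 := by linear_combination q2 - 3*ha3 - 4*ha4
      exact (mul_eq_zero.mp this).resolve_left h2K
    have q1 : a 1 + a 2 + a 3 + a 4 = 0 := by simpa using hd 0
    have ha1 : a 1 = 0 := by linear_combination q1 - ha2 - ha3 - ha4
    refine ⟨a 0, ?_⟩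
    have hA1 : A (a 1) = 0 := by rw [ha1, map_zero]
    have hA2 : A (a 2) = 0 := by rw [ha2, map_zero]
    have hA3 : A (a 3) = 0 := by rw [ha3, map_zero]
    have hA4 : A (a 4) = 0 := by rw [ha4, map_zero]
    linear_combination hz0 - y*hA1 - y^2*hA2 - y^3*hA3 - y^4*hA4
  have hθne : ∀ z : L, z ≠ 0 → θ z ≠ 0 := fun z hz h => hz (θ.injective (by rw [h, map_zero]))
  have hcom : ∀ r : K, θ (A r) = A r := fun r => AlgEquiv.commutes θ r
  have hBlem : ∀ μ0 μ1 s t : L, μ1 ≠ 0 → s ≠ 0 → t ≠ 0 →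
      μ0 * s + μ1 * θ s = 0 → μ0 * t + μ1 * θ t = 0 → ∃ k : K, s = A k * t := by
    intro μ0 μ1 s t hμ1 hs ht h1 h2
    have hkey : θ s * t = θ t * s := by
      have h3 : μ1 * (θ s * t - θ t * s) = 0 := by linear_combination t * h1 - s * h2
      have h4 := (mul_eq_zero.mp h3).resolve_left hμ1
      linear_combination h4
    have hfrac : θ (s / t) = s / t := by
      rw [map_div₀, div_eq_div_iff (hθne t ht) ht]
      linear_combination hkey
    obtain ⟨k, hk⟩ := hfix _ hfrac
    exact ⟨k, ((div_eq_iff ht).mp hk.symm)⟩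
  have hClem : ∀ l0 l1 l2 u v w : L,
      (∀ a b c : K, A a * u + A b * v + A c * w = 0 → a = 0 ∧ b = 0 ∧ c = 0) →
      l0 * u + l1 * θ u + l2 * θ (θ u) = 0 →
      l0 * v + l1 * θ v + l2 * θ (θ v) = 0 →
      l0 * w + l1 * θ w + l2 * θ (θ w) = 0 →
      l0 = 0 ∧ l1 = 0 ∧ l2 = 0 := by
    intro l0 l1 l2 u v w hind Eu Ev Ew
    have hm1 : (-1 : K) ≠ 0 := by
      intro h; exact one_ne_zero (α := K) (by linear_combination -h)
    have hu : u ≠ 0 := fun h => hm1 (hind (-1) 0 0 (by rw [h]; simp)).1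
    have hv : v ≠ 0 := fun h => hm1 (hind 0 (-1) 0 (by rw [h]; simp)).2.1
    have hw : w ≠ 0 := fun h => hm1 (hind 0 0 (-1) (by rw [h]; simp)).2.2
    have hdep : ∀ p : L, θ p * u - p * θ u = 0 → ∃ k : K, p = A k * u := by
      intro p h0
      have hfr : θ (p / u) = p / u := by
        rw [map_div₀, div_eq_div_iff (hθne u hu) hu]
        linear_combination h0
      obtain ⟨k, hk⟩ := hfix _ hfr
      exact ⟨k, (div_eq_iff hu).mp hk.symm⟩
    by_cases hl2 : l2 = 0
    · by_cases hl1 : l1 = 0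
      · rw [hl1, hl2] at Eu
        simp only [zero_mul, add_zero] at Eu
        exact ⟨(mul_eq_zero.mp Eu).resolve_right hu, hl1, hl2⟩
      · obtain ⟨k, hk⟩ := hBlem l0 l1 u v hl1 hu hv
          (by rw [hl2] at Eu; linear_combination Eu)
          (by rw [hl2] at Ev; linear_combination Ev)
        exact absurd (hind (-1) k 0 (by
          simp only [map_neg, map_one, map_zero, zero_mul, add_zero, neg_one_mul]
          linear_combination -hk + u * (A.map_neg 1).trans (by rw [A.map_one]))).1 hm1
    · have hs0 : θ v * u - v * θ u ≠ 0 := by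
        intro h
        obtain ⟨k, hk⟩ := hdep v (by linear_combination h)
        exact hm1 (hind k (-1) 0 (by
          simp only [map_neg, map_one, map_zero, zero_mul, add_zero, neg_one_mul]
          linear_combination -hk + v * (A.map_neg 1).trans (by rw [A.map_one]))).2.1
      have ht0 : θ w * u - w * θ u ≠ 0 := by
        intro h
        obtain ⟨k, hk⟩ := hdep w (by linear_combination h)
        exact hm1 (hind k 0 (-1) (by
          simp only [map_neg, map_one, map_zero, zero_mul, add_zero, neg_one_mul]
          linear_combination -hk + w * (A.map_neg 1).trans (by rw [A.map_one]))).2.2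
      have hEs : (-l0) * (θ v * u - v * θ u) + l2 * θ (θ v * u - v * θ u) = 0 := by
        simp only [map_sub, map_mul]
        linear_combination θ u * Ev - θ v * Eu
      have hEt : (-l0) * (θ w * u - w * θ u) + l2 * θ (θ w * u - w * θ u) = 0 := by
        simp only [map_sub, map_mul]
        linear_combination θ u * Ew - θ w * Eu
      obtain ⟨k, hk⟩ := hBlem (-l0) l2 _ _ hl2 hs0 ht0 hEs hEt
      have hfr : θ ((v - A k * w) / u) = (v - A k * w) / u := by
        simp only [map_div₀, map_sub, map_mul, hcom]
        rw [div_eq_div_iff (hθne u hu) hu]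
        linear_combination hk
      obtain ⟨k1, hk1⟩ := hfix _ hfr
      have hveq : A k1 * u + A (-1) * v + A k * w = 0 := by
        rw [map_neg, map_one]
        have h6 := (div_eq_iff hu).mp hk1.symm
        linear_combination -h6
      exact absurd (hind k1 (-1) k hveq).2.1 hm1
  have hpow2 : ∀ z : L, (θ ^ (2:ℕ)) z = θ (θ z) := fun z => by
    rw [show (2:ℕ) = 1+1 from rfl, pow_add, pow_one, AlgEquiv.mul_apply]
  set g : Fin 3 → (Fin 5 → L) := fun i (j : Fin 5) => (θ ^ (i:ℕ)) (y ^ (j:ℕ)) with hg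
  have hθp1 : ∀ n : ℕ, θ (y^n) = (y+1)^n := fun n => by rw [map_pow, hθ]
  have hθp2 : ∀ n : ℕ, θ ((y+1)^n) = (y+2)^n := fun n => by rw [map_pow, hθ1]
  refine ⟨?_, ?_, ?_⟩
  · -- dimension 3
    have hgind : LinearIndependent L g := by
      rw [Fintype.linearIndependent_iff]
      intro lam hsum
      have ev : ∀ j : Fin 5, lam 0 * y^(j:ℕ) + lam 1 * θ (y^(j:ℕ)) + lam 2 * θ (θ (y^(j:ℕ))) = 0 := by
        intro j
        have h7 := congr_fun hsum j
        simp only [hg, Fin.sum_univ_three, Finset.sum_apply, Pi.add_apply, Pi.smul_apply,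
          smul_eq_mul, Pi.zero_apply, show ((0:Fin 3):ℕ) = 0 from rfl,
          show ((1:Fin 3):ℕ) = 1 from rfl, show ((2:Fin 3):ℕ) = 2 from rfl,
          pow_zero, pow_one, hpow2, AlgEquiv.one_apply] at h7
        linear_combination h7
      have ev0 := ev 0
      have ev1 := ev 1
      have ev2 := ev 2
      simp only [show ((0:Fin 5):ℕ) = 0 from rfl, pow_zero, map_one] at ev0
      simp only [show ((1:Fin 5):ℕ) = 1 from rfl, pow_one, hθ, hθ1] at ev1
      simp only [show ((2:Fin 5):ℕ) = 2 from rfl, hθp1, hθp2] at ev2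
      have E1 : lam 1 + 2 * lam 2 = 0 := by linear_combination ev1 - y * ev0
      have E2 : lam 1 + 4 * lam 2 = 0 := by linear_combination ev2 - 2*y*ev1 + y^2 * ev0
      have hl2 : lam 2 = 0 := by linear_combination 3*E2 - 3*E1 - lam 2 * h5L
      have hl1 : lam 1 = 0 := by linear_combination E1 - 2*hl2
      have hl0 : lam 0 = 0 := by linear_combination ev0 - hl1 - hl2
      intro i; fin_cases i <;> assumption
    rw [hC, finrank_span_eq_card hgind]
    simp
  · -- min distance ≥ 3
    intro c hcC hc0
    rw [hC] at hcC
    obtain ⟨lam, hlam⟩ := (Submodule.mem_span_range_iff_exists_fun L).mp hcC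
    set F : L →ₗ[K] L :=
      { toFun := fun z => lam 0 * z + lam 1 * θ z + lam 2 * θ (θ z),
        map_add' := by intro p q; simp only [map_add]; ring,
        map_smul' := by
          intro k p
          simp only [Algebra.smul_def, map_mul, AlgEquiv.commutes, RingHom.id_apply, show ∀ r : K, θ (algebraMap K L r) = algebraMap K L r from fun r => AlgEquiv.commutes θ r]
          ring } with hF
    have hFapp : ∀ z : L, F z = lam 0 * z + lam 1 * θ z + lam 2 * θ (θ z) := fun z => rfl
    have hFb : ∀ j : Fin 5, F (b j) = c j := by
      intro j
      have h7 := congr_fun hlam j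
      simp only [hg, Fin.sum_univ_three, Finset.sum_apply, Pi.add_apply, Pi.smul_apply,
        smul_eq_mul, show ((0:Fin 3):ℕ) = 0 from rfl, show ((1:Fin 3):ℕ) = 1 from rfl,
        show ((2:Fin 3):ℕ) = 2 from rfl, pow_zero, pow_one, hpow2, AlgEquiv.one_apply] at h7
      rw [hFapp, hb]
      linear_combination h7
    have hrange : Submodule.span K (Set.range c) = LinearMap.range F := by
      have hcF : c = ⇑F ∘ b := funext fun j => (hFb j).symm
      rw [hcF, Set.range_comp, ← Submodule.map_span, hspan, Submodule.map_top]
    have hkle : Module.finrank K (LinearMap.ker F) ≤ 2 := by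
      by_contra hgt
      push_neg at hgt
      have h3 : 3 ≤ Module.finrank K (LinearMap.ker F) := hgt
      set Bk := Module.finBasis K (LinearMap.ker F) with hBk
      set emb : Fin 3 → Fin (Module.finrank K (LinearMap.ker F)) :=
        (fun i => ⟨(i:ℕ), lt_of_lt_of_le i.isLt h3⟩) with hemb
      have hembinj : Function.Injective emb := by
        intro i1 i2 h12
        apply Fin.ext
        simpa [hemb, Fin.ext_iff] using h12
      have hindtrip : LinearIndependent K (fun i : Fin 3 => ((Bk (emb i) : L))) := by
        have h8 := (Bk.linearIndependent.comp emb hembinj).map'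
          (LinearMap.ker F).subtype (Submodule.ker_subtype _)
        exact h8
      have hind3 := Fintype.linearIndependent_iff.mp hindtrip
      have hprem : ∀ a b' c' : K,
          A a * (Bk (emb 0) : L) + A b' * (Bk (emb 1) : L) + A c' * (Bk (emb 2) : L) = 0 →
          a = 0 ∧ b' = 0 ∧ c' = 0 := by
        intro a b' c' hrel
        have h9 := hind3 ![a, b', c'] (by
          simp only [Fin.sum_univ_three, Matrix.cons_val_zero, Matrix.cons_val_one,
            Matrix.head_cons, Matrix.cons_val_two, Matrix.tail_cons, Algebra.smul_def]
          exact hrel)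
        exact ⟨by simpa using h9 0, by simpa using h9 1, by simpa using h9 2⟩
      have hker0 : ∀ i : Fin 3, lam 0 * (Bk (emb i) : L) + lam 1 * θ (Bk (emb i) : L)
          + lam 2 * θ (θ (Bk (emb i) : L)) = 0 := by
        intro i
        have hm := (Bk (emb i)).2
        rw [LinearMap.mem_ker] at hm
        rw [← hFapp]
        exact hm
      obtain ⟨hl0, hl1, hl2⟩ := hClem (lam 0) (lam 1) (lam 2) _ _ _ hprem
        (hker0 0) (hker0 1) (hker0 2)
      apply hc0
      rw [← hlam, Fin.sum_univ_three, hl0, hl1, hl2]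
      simp
    have hrk := LinearMap.finrank_range_add_finrank_ker F
    rw [hfin] at hrk
    show 3 ≤ Module.finrank K (Submodule.span K (Set.range c))
    rw [hrange]
    omega
  · -- existence of rank-3 codeword
    refine ⟨g 0 + (3:L) • g 1 + g 2, ?_, ?_, ?_⟩
    · rw [hC]
      exact add_mem (add_mem (Submodule.subset_span ⟨0, rfl⟩)
        (Submodule.smul_mem _ _ (Submodule.subset_span ⟨1, rfl⟩)))
        (Submodule.subset_span ⟨2, rfl⟩)
    · intro h
      have h2 := congr_fun h 2
      simp only [hg, Pi.add_apply, Pi.smul_apply, smul_eq_mul, Pi.zero_apply,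
        show ((0:Fin 3):ℕ) = 0 from rfl, show ((1:Fin 3):ℕ) = 1 from rfl,
        show ((2:Fin 3):ℕ) = 2 from rfl, show ((2:Fin 5):ℕ) = 2 from rfl,
        pow_zero, pow_one, hpow2, AlgEquiv.one_apply, hθp1, hθp2] at h2
      exact h2L (by linear_combination h2 - (y^2+2*y+1)*h5L)
    · have hc3 : ∀ j : Fin 5, (g 0 + (3:L) • g 1 + g 2) j
          = y^(j:ℕ) + 3*(y+1)^(j:ℕ) + (y+2)^(j:ℕ) := by
        intro j
        simp only [hg, Pi.add_apply, Pi.smul_apply, smul_eq_mul,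
          show ((0:Fin 3):ℕ) = 0 from rfl, show ((1:Fin 3):ℕ) = 1 from rfl,
          show ((2:Fin 3):ℕ) = 2 from rfl, pow_zero, pow_one, hpow2, AlgEquiv.one_apply,
          hθp1, hθp2]
      have hc30 : (g 0 + (3:L) • g 1 + g 2) 0 = 0 := by
        rw [hc3 0]; simp only [show ((0:Fin 5):ℕ) = 0 from rfl, show ((1:Fin 5):ℕ) = 1 from rfl, show ((2:Fin 5):ℕ) = 2 from rfl, show ((3:Fin 5):ℕ) = 3 from rfl, show ((4:Fin 5):ℕ) = 4 from rfl, pow_zero, pow_one]; linear_combination h5L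
      have hc31 : (g 0 + (3:L) • g 1 + g 2) 1 = 0 := by
        rw [hc3 1]; simp only [show ((0:Fin 5):ℕ) = 0 from rfl, show ((1:Fin 5):ℕ) = 1 from rfl, show ((2:Fin 5):ℕ) = 2 from rfl, show ((3:Fin 5):ℕ) = 3 from rfl, show ((4:Fin 5):ℕ) = 4 from rfl, pow_zero, pow_one]; linear_combination (y+1)*h5L
      have hc32 : (g 0 + (3:L) • g 1 + g 2) 2 = 2 := by
        rw [hc3 2]; simp only [show ((0:Fin 5):ℕ) = 0 from rfl, show ((1:Fin 5):ℕ) = 1 from rfl, show ((2:Fin 5):ℕ) = 2 from rfl, show ((3:Fin 5):ℕ) = 3 from rfl, show ((4:Fin 5):ℕ) = 4 from rfl, pow_zero, pow_one]; linear_combination (y^2+2*y+1)*h5L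
      have hc33 : (g 0 + (3:L) • g 1 + g 2) 3 = y + 1 := by
        rw [hc3 3]; simp only [show ((0:Fin 5):ℕ) = 0 from rfl, show ((1:Fin 5):ℕ) = 1 from rfl, show ((2:Fin 5):ℕ) = 2 from rfl, show ((3:Fin 5):ℕ) = 3 from rfl, show ((4:Fin 5):ℕ) = 4 from rfl, pow_zero, pow_one]; linear_combination (y^3+3*y^2+4*y+2)*h5L
      have hc34 : (g 0 + (3:L) • g 1 + g 2) 4 = 2*y^2+4*y+4 := by
        rw [hc3 4]; simp only [show ((0:Fin 5):ℕ) = 0 from rfl, show ((1:Fin 5):ℕ) = 1 from rfl, show ((2:Fin 5):ℕ) = 2 from rfl, show ((3:Fin 5):ℕ) = 3 from rfl, show ((4:Fin 5):ℕ) = 4 from rfl, pow_zero, pow_one]; linear_combination (y^4+4*y^3+8*y^2+8*y+3)*h5L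
      set v : Fin 3 → L := ![2, y+1, 2*y^2+4*y+4] with hvdef
      have hsp : Submodule.span K (Set.range (g 0 + (3:L) • g 1 + g 2))
          = Submodule.span K (Set.range v) := by
        apply le_antisymm
        · rw [Submodule.span_le]
          rintro _ ⟨j, rfl⟩
          fin_cases j
          · show (g 0 + (3:L) • g 1 + g 2) 0 ∈ (Submodule.span K (Set.range v) : Set (L))
            rw [hc30]; exact Submodule.zero_mem _
          · show (g 0 + (3:L) • g 1 + g 2) 1 ∈ (Submodule.span K (Set.range v) : Set (L))
            rw [hc31]; exact Submodule.zero_mem _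
          · show (g 0 + (3:L) • g 1 + g 2) 2 ∈ (Submodule.span K (Set.range v) : Set (L))
            rw [hc32]; exact Submodule.subset_span ⟨0, rfl⟩
          · show (g 0 + (3:L) • g 1 + g 2) 3 ∈ (Submodule.span K (Set.range v) : Set (L))
            rw [hc33]; exact Submodule.subset_span ⟨1, rfl⟩
          · show (g 0 + (3:L) • g 1 + g 2) 4 ∈ (Submodule.span K (Set.range v) : Set (L))
            rw [hc34]; exact Submodule.subset_span ⟨2, rfl⟩
        · rw [Submodule.span_le]
          rintro _ ⟨i, rfl⟩
          fin_cases i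
          · show v 0 ∈ (Submodule.span K (Set.range (g 0 + (3:L) • g 1 + g 2)) : Set (L))
            rw [show v 0 = (g 0 + (3:L) • g 1 + g 2) 2 from hc32.symm]
            exact Submodule.subset_span ⟨2, rfl⟩
          · show v 1 ∈ (Submodule.span K (Set.range (g 0 + (3:L) • g 1 + g 2)) : Set (L))
            rw [show v 1 = (g 0 + (3:L) • g 1 + g 2) 3 from hc33.symm]
            exact Submodule.subset_span ⟨3, rfl⟩
          · show v 2 ∈ (Submodule.span K (Set.range (g 0 + (3:L) • g 1 + g 2)) : Set (L))
            rw [show v 2 = (g 0 + (3:L) • g 1 + g 2) 4 from hc34.symm]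
            exact Submodule.subset_span ⟨4, rfl⟩
      have hvind : LinearIndependent K v := by
        rw [Fintype.linearIndependent_iff]
        intro a h
        have h' : A (a 0) * 2 + A (a 1) * (y+1) + A (a 2) * (2*y^2+4*y+4) = 0 := by
          simp only [hvdef, Fin.sum_univ_three, Matrix.cons_val_zero, Matrix.cons_val_one,
            Matrix.head_cons, Matrix.cons_val_two, Matrix.tail_cons, Algebra.smul_def] at h
          linear_combination h
        have hdd := Fintype.linearIndependent_iff.mp hbind
          ![2*(a 0) + a 1 + 4*(a 2), a 1 + 4*(a 2), 2*(a 2), 0, 0] (by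
            simp only [hb, Fin.sum_univ_five, Algebra.smul_def, Fin.val_zero, Fin.val_one,
              pow_zero, pow_one, show ((2:Fin 5):ℕ) = 2 from rfl,
              show ((3:Fin 5):ℕ) = 3 from rfl, show ((4:Fin 5):ℕ) = 4 from rfl,
              Matrix.cons_val_zero, Matrix.cons_val_one, Matrix.head_cons, Matrix.cons_val_two,
              Matrix.cons_val_three, Matrix.cons_val_four, Matrix.tail_cons, map_add, map_mul,
              map_ofNat, map_zero]
            linear_combination h')
        have q2 : (2:K) * a 2 = 0 := by simpa using hdd 2
        have ha2 : a 2 = 0 := (mul_eq_zero.mp q2).resolve_left h2K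
        have q1 : a 1 + 4*(a 2) = 0 := by simpa using hdd 1
        have ha1 : a 1 = 0 := by linear_combination q1 - 4*ha2
        have q0 : 2*(a 0) + a 1 + 4*(a 2) = 0 := by simpa using hdd 0
        have ha0 : a 0 = 0 := by
          have h10 : (2:K) * a 0 = 0 := by linear_combination q0 - ha1 - 4*ha2
          exact (mul_eq_zero.mp h10).resolve_left h2K
        intro i; fin_cases i <;> assumption
      show Module.finrank K (Submodule.span K (Set.range (g 0 + (3:L) • g 1 + g 2))) = 3
      rw [hsp, finrank_span_eq_card hvind]
      simp
end
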